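/- arXiv:2001.00245 — 5 statements merged into one kernel-verified Lean document; each statement's English description precedes it below -/
import Mathlib

section
/- Let n ≥ 1 and 0 ≤ k ≤ n−1 be integers and let a ∈ (0,1). For every function f : ℝ → ℝ that is n times continuously differentiable on [0,1] and satisfies f^{(j)}(0) = f^{(j)}(1) = 0 for all j = 0,…,n−1, one has f^{(k)}(a) = ∫₀^a f^{(n)}(x)·G₁^{(n)}(x) dx + ∫_a^1 f^{(n)}(x)·G₂^{(n)}(x) dx, where G₁ and G₂ are the two polynomial pieces of the extremal spline g_{n,k}. -/
open Finset

/-- The polynomial `h_{n,k}(x,a)`. -/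
noncomputable def hpoly (n k : ℕ) (x a : ℝ) : ℝ :=
  ∑ l ∈ Finset.range n,
    (-1 : ℝ) ^ (n - 1 - l) * (Nat.choose (2 * n - 1 - k) (n - 1 - l) : ℝ) *
      x ^ (n - 1 - l) * a ^ l *
      ∑ m ∈ Finset.range (l + 1), (Nat.choose (n - 1 + m) m : ℝ) * x ^ m

/-- The piece of the extremal spline `g_{n,k}` on `[0,a]`. -/
noncomputable def G1 (n k : ℕ) (a : ℝ) (x : ℝ) : ℝ :=
  ((-1 : ℝ) ^ (n - k - 1) / (Nat.factorial (2 * n - k - 1) : ℝ)) *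
    (1 - a) ^ (n - k) * x ^ n * hpoly n k (1 - x) (1 - a)

/-- The piece of the extremal spline `g_{n,k}` on `[a,1]`. -/
noncomputable def G2 (n k : ℕ) (a : ℝ) (x : ℝ) : ℝ :=
  ((-1 : ℝ) ^ (n - 1) / (Nat.factorial (2 * n - k - 1) : ℝ)) *
    a ^ (n - k) * (1 - x) ^ n * hpoly n k x a

open Polynomial

/-- inner truncated geometric-type series -/
noncomputable def Sp (n i : ℕ) : ℝ[X] :=
  ∑ m ∈ Finset.range (n - i), C ((Nat.choose (n - 1 + m) m : ℝ)) * X ^ m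

noncomputable def cH (n k i : ℕ) (a : ℝ) : ℝ :=
  (-1) ^ i * (Nat.choose (2 * n - 1 - k) i : ℝ) * a ^ (n - 1 - i)

noncomputable def Hp (n k : ℕ) (a : ℝ) : ℝ[X] :=
  ∑ i ∈ Finset.range n, C (cH n k i a) * (Sp n i * X ^ i)

noncomputable def Fq (n k : ℕ) (a : ℝ) : ℝ[X] :=
  C (a ^ (n - k)) * ((1 - X) ^ n * Hp n k a)

lemma coeff_sum_C_mul_X_pow (f : ℕ → ℝ) (M d : ℕ) :
    (∑ m ∈ Finset.range M, C (f m) * X ^ m).coeff d = if d < M then f d else 0 := by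
  rw [finset_sum_coeff]
  simp only [coeff_C_mul, coeff_X_pow, mul_ite, mul_one, mul_zero]
  rw [Finset.sum_ite_eq (Finset.range M) d f]
  simp [Finset.mem_range]

lemma Hp_eval (n k : ℕ) (a x : ℝ) : (Hp n k a).eval x = hpoly n k x a := by
  unfold Hp hpoly
  rw [eval_finset_sum, ← Finset.sum_range_reflect]
  refine Finset.sum_congr rfl fun l hl => ?_
  rw [Finset.mem_range] at hl
  have h1 : n - 1 - (n - 1 - l) = l := by omega
  have h2 : n - (n - 1 - l) = l + 1 := by omega
  unfold cH Sp
  rw [h1, h2, eval_mul, eval_mul, eval_pow, eval_C, eval_X, eval_finset_sum]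
  simp only [eval_mul, eval_C, eval_pow, eval_X]
  ring

lemma Hp_coeff (n k : ℕ) (a : ℝ) {d : ℕ} (hd : d < n) :
    (Hp n k a).coeff d =
      ∑ i ∈ Finset.range (d + 1), cH n k i a * (Nat.choose (n - 1 + (d - i)) (d - i) : ℝ) := by
  unfold Hp
  rw [finset_sum_coeff]
  rw [← Finset.sum_subset (Finset.range_subset_range.2 hd)]
  · refine Finset.sum_congr rfl fun i hi => ?_
    rw [Finset.mem_range] at hi
    rw [coeff_C_mul, coeff_mul_X_pow', if_pos (by omega : i ≤ d)]
    unfold Sp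
    rw [coeff_sum_C_mul_X_pow, if_pos (by omega : d - i < n - i)]
  · intro i hi hni
    rw [Finset.mem_range] at hi
    rw [Finset.mem_range, not_lt] at hni
    rw [coeff_C_mul, coeff_mul_X_pow', if_neg (by omega), mul_zero]

lemma coeff_C_sub_X_pow (a : ℝ) (N d : ℕ) (hd : d ≤ N) :
    ((C a - X) ^ N).coeff d = (-1) ^ d * (Nat.choose N d : ℝ) * a ^ (N - d) := by
  have h : (C a - X : ℝ[X]) = -(X + C (-a)) := by
    simp [map_neg]; ring
  have h1 : (-1 : ℝ[X]) = C (-1) := by simp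
  rw [h, neg_pow, h1, ← C_pow, coeff_C_mul, coeff_X_add_C_pow]
  have h2 : (-1 : ℝ) ^ N = (-1) ^ d * (-1) ^ (N - d) := by
    rw [← pow_add]; congr 1; omega
  rw [h2]
  have h3 : (-a : ℝ) ^ (N - d) = (-1) ^ (N - d) * a ^ (N - d) := by
    rw [neg_pow]
  rw [h3]
  have h4 : ((-1 : ℝ) ^ (N - d)) * ((-1 : ℝ) ^ (N - d)) = 1 := by
    rw [← pow_add, ← two_mul, pow_mul, neg_one_sq, one_pow]
  calc (-1 : ℝ) ^ d * (-1) ^ (N - d) * ((-1) ^ (N - d) * a ^ (N - d) * (N.choose d : ℝ))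
      = ((-1 : ℝ) ^ (N - d) * (-1) ^ (N - d)) * ((-1) ^ d * (N.choose d : ℝ) * a ^ (N - d)) := by
        ring
    _ = (-1) ^ d * (N.choose d : ℝ) * a ^ (N - d) := by rw [h4, one_mul]

theorem test : True := trivial

noncomputable def Pp (n k : ℕ) (a : ℝ) : ℝ[X] :=
  ∑ i ∈ Finset.range n, C (cH n k i a) * X ^ i

lemma Pp_coeff (n k : ℕ) (a : ℝ) (d : ℕ) :
    (Pp n k a).coeff d = if d < n then cH n k d a else 0 := by
  unfold Pp; exact coeff_sum_C_mul_X_pow _ _ _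

lemma key_coeff (n k : ℕ) (hk : k + 1 ≤ n) (a : ℝ) {d : ℕ} (hd : d < n) :
    (Fq n k a).coeff d = ((C a - X) ^ (2 * n - 1 - k)).coeff d := by
  classical
  set N := 2 * n - 1 - k with hN
  set J : PowerSeries ℝ := PowerSeries.mk fun m => ((n - 1 + m).choose (n - 1) : ℝ) with hJ
  have hunit : J * (1 - PowerSeries.X : PowerSeries ℝ) ^ n = 1 := by
    have := PowerSeries.mk_add_choose_mul_one_sub_pow_eq_one (S := ℝ) (d := n - 1)
    rw [show n - 1 + 1 = n by omega] at this
    exact this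
  -- step 1 : coefficients of Hp agree with those of Pp * J below n
  have step1 : ∀ e, e < n → (PowerSeries.coeff e) ((Hp n k a : ℝ[X]) : PowerSeries ℝ) =
      (PowerSeries.coeff e) (((Pp n k a : ℝ[X]) : PowerSeries ℝ) * J) := by
    intro e he
    rw [Polynomial.coeff_coe, Hp_coeff n k a he, PowerSeries.coeff_mul,
      Finset.Nat.sum_antidiagonal_eq_sum_range_succ_mk]
    refine Finset.sum_congr rfl fun i hi => ?_
    rw [Finset.mem_range] at hi
    rw [Polynomial.coeff_coe, Pp_coeff, if_pos (by omega : i < n), hJ, PowerSeries.coeff_mk]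
    congr 2
    have h1 : n - 1 ≤ n - 1 + (e - i) := Nat.le_add_right _ _
    have h2 : n - 1 + (e - i) - (n - 1) = e - i := by omega
    have h3 := Nat.choose_symm h1
    rw [h2] at h3
    exact h3
  -- step 2 : coefficient of (1-X)^n * Hp equals coefficient of Pp below n
  have step2 : (PowerSeries.coeff d)
        ((1 - PowerSeries.X : PowerSeries ℝ) ^ n * ((Hp n k a : ℝ[X]) : PowerSeries ℝ)) =
      cH n k d a := by
    have e1 : (PowerSeries.coeff d)
          ((1 - PowerSeries.X : PowerSeries ℝ) ^ n * ((Hp n k a : ℝ[X]) : PowerSeries ℝ)) =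
        (PowerSeries.coeff d)
          ((1 - PowerSeries.X : PowerSeries ℝ) ^ n *
            (((Pp n k a : ℝ[X]) : PowerSeries ℝ) * J)) := by
      rw [PowerSeries.coeff_mul, PowerSeries.coeff_mul]
      refine Finset.sum_congr rfl fun p hp => ?_
      rw [Finset.HasAntidiagonal.mem_antidiagonal] at hp
      rw [step1 p.2 (by omega)]
    rw [e1, show ((1 - PowerSeries.X : PowerSeries ℝ) ^ n *
        (((Pp n k a : ℝ[X]) : PowerSeries ℝ) * J)) =
        ((Pp n k a : ℝ[X]) : PowerSeries ℝ) * (J * (1 - PowerSeries.X) ^ n) by ring,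
      hunit, mul_one, Polynomial.coeff_coe, Pp_coeff, if_pos hd]
  -- now compute the coefficient of Fq
  have hFq : (Fq n k a).coeff d = a ^ (n - k) * cH n k d a := by
    unfold Fq
    rw [coeff_C_mul]
    congr 1
    have hcast : (((1 - X) ^ n * Hp n k a : ℝ[X]).coeff d) = (PowerSeries.coeff d)
        ((1 - PowerSeries.X : PowerSeries ℝ) ^ n * ((Hp n k a : ℝ[X]) : PowerSeries ℝ)) := by
      rw [← Polynomial.coeff_coe, Polynomial.coe_mul, Polynomial.coe_pow, Polynomial.coe_sub,
        Polynomial.coe_one, Polynomial.coe_X]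
    rw [hcast, step2]
  rw [hFq, coeff_C_sub_X_pow a N d (by omega)]
  unfold cH
  rw [← hN]
  have h5 : a ^ (n - k) * ((-1 : ℝ) ^ d * (N.choose d : ℝ) * a ^ (n - 1 - d)) =
      (-1 : ℝ) ^ d * (N.choose d : ℝ) * (a ^ (n - k) * a ^ (n - 1 - d)) := by ring
  rw [h5, ← pow_add, show n - k + (n - 1 - d) = N - d by omega]

lemma key_dvd (n k : ℕ) (hk : k + 1 ≤ n) (a : ℝ) :
    (X : ℝ[X]) ^ n ∣ (Fq n k a - (C a - X) ^ (2 * n - 1 - k)) := by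
  rw [Polynomial.X_pow_dvd_iff]
  intro d hd
  rw [coeff_sub, key_coeff n k hk a hd, sub_self]

lemma natDegree_Hp_le (n k : ℕ) (a : ℝ) : (Hp n k a).natDegree ≤ n - 1 := by
  unfold Hp
  refine Polynomial.natDegree_sum_le_of_forall_le _ _ fun i hi => ?_
  rw [Finset.mem_range] at hi
  refine (natDegree_C_mul_le _ _).trans ?_
  refine (natDegree_mul_le).trans ?_
  have h1 : (Sp n i).natDegree ≤ n - i - 1 := by
    unfold Sp
    refine Polynomial.natDegree_sum_le_of_forall_le _ _ fun m hm => ?_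
    rw [Finset.mem_range] at hm
    refine (natDegree_C_mul_le _ _).trans ?_
    rw [natDegree_X_pow]; omega
  have h2 : ((X : ℝ[X]) ^ i).natDegree = i := natDegree_X_pow i
  omega

lemma natDegree_one_sub_X : (1 - X : ℝ[X]).natDegree = 1 := by
  have : (1 - X : ℝ[X]) = -(X - C 1) := by rw [map_one]; ring
  rw [this, natDegree_neg, natDegree_X_sub_C]

lemma natDegree_Fq_le (n k : ℕ) (hn : 1 ≤ n) (a : ℝ) :
    (Fq n k a).natDegree ≤ 2 * n - 1 := by
  unfold Fq
  refine (natDegree_C_mul_le _ _).trans (natDegree_mul_le.trans ?_)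
  have h1 : ((1 - X : ℝ[X]) ^ n).natDegree ≤ n := by
    refine natDegree_pow_le.trans ?_
    rw [natDegree_one_sub_X]; omega
  have h2 := natDegree_Hp_le n k a
  omega

lemma comp_one_sub_X_invol (p : ℝ[X]) : (p.comp (1 - X)).comp (1 - X) = p := by
  rw [Polynomial.comp_assoc]
  have : ((1 - X : ℝ[X]).comp (1 - X)) = X := by
    rw [sub_comp, one_comp, X_comp]; ring
  rw [this, comp_X]

lemma Fq_comp (n k : ℕ) (b : ℝ) :
    (Fq n k b).comp (1 - X) = C (b ^ (n - k)) * (X ^ n * (Hp n k b).comp (1 - X)) := by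
  unfold Fq
  rw [mul_comp, C_comp, mul_comp, pow_comp, sub_comp, one_comp, X_comp]
  ring_nf

/-- The central polynomial identity. -/
lemma main_poly_id (n k : ℕ) (hn : 1 ≤ n) (hk : k + 1 ≤ n) (a : ℝ) :
    C ((-1 : ℝ) ^ (n - k - 1)) * (Fq n k (1 - a)).comp (1 - X)
      - C ((-1 : ℝ) ^ (n - 1)) * Fq n k a
      = C ((-1 : ℝ) ^ n) * (C a - X) ^ (2 * n - 1 - k) := by
  obtain ⟨t, ht⟩ : ∃ t, n = k + t + 1 := ⟨n - k - 1, by omega⟩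
  subst ht
  set n := k + t + 1 with hn'
  have hNn : 2 * n - 1 - k = n + t := by omega
  have hnk1 : n - k - 1 = t := by omega
  have hn1 : n - 1 = k + t := by omega
  rw [hNn, hnk1, hn1]
  set D : ℝ[X] := C ((-1 : ℝ) ^ t) * (Fq n k (1 - a)).comp (1 - X)
      - C ((-1 : ℝ) ^ (k + t)) * Fq n k a - C ((-1 : ℝ) ^ n) * (C a - X) ^ (n + t) with hD
  -- sign facts
  have sign1 : (C ((-1 : ℝ) ^ n) : ℝ[X]) = -C ((-1 : ℝ) ^ (k + t)) := by
    rw [hn', pow_succ, map_mul]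
    simp
  have sign2 : (C ((-1:ℝ)^n) * C ((-1:ℝ)^(n + t)) : ℝ[X]) = C ((-1 : ℝ) ^ t) := by
    rw [← C_mul, ← pow_add, hn', show k + t + 1 + (k + t + 1 + t) = 2 * (k + t + 1) + t by omega,
      pow_add, pow_mul, neg_one_sq, one_pow, one_mul]
  have hWkey : ∀ b : ℝ, ∃ W : ℝ[X], Fq n k b - (C b - X) ^ (n + t) = X ^ n * W := by
    intro b
    obtain ⟨W, hW⟩ := key_dvd n k hk b
    exact ⟨W, by rwa [hNn] at hW⟩
  -- X^n divides D
  have dvd1 : (X : ℝ[X]) ^ n ∣ D := by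
    obtain ⟨W, hW⟩ := hWkey a
    have hFqc := Fq_comp n k (1 - a)
    refine ⟨C ((-1 : ℝ) ^ t) * (C ((1 - a) ^ (n - k)) *
        (Hp n k (1 - a)).comp (1 - X)) + C ((-1 : ℝ) ^ n) * W, ?_⟩
    rw [hD]
    linear_combination (C ((-1:ℝ) ^ t) : ℝ[X]) * hFqc + (C ((-1:ℝ)^n) : ℝ[X]) * hW
      - Fq n k a * sign1
  -- (1-X)^n divides D
  have dvd2 : ((1 : ℝ[X]) - X) ^ n ∣ D := by
    have hcompN : ((C a - X : ℝ[X]) ^ (n + t)).comp (1 - X)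
        = C ((-1 : ℝ) ^ (n + t)) * (C (1 - a) - X) ^ (n + t) := by
      rw [pow_comp, sub_comp, C_comp, X_comp]
      have : (C a - (1 - X) : ℝ[X]) = C (-1 : ℝ) * (C (1 - a) - X) := by
        simp only [map_sub, map_neg, map_one]
        ring
      rw [this, mul_pow, ← C_pow]
    have dvdE : (X : ℝ[X]) ^ n ∣ D.comp (1 - X) := by
      obtain ⟨W', hW'⟩ := hWkey (1 - a)
      have hFqc := Fq_comp n k a
      refine ⟨C ((-1 : ℝ) ^ t) * W'
          - C ((-1 : ℝ) ^ (k + t)) * (C (a ^ (n - k)) * (Hp n k a).comp (1 - X)), ?_⟩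
      rw [hD, sub_comp, sub_comp, mul_comp, mul_comp, mul_comp, C_comp, C_comp, C_comp,
        comp_one_sub_X_invol, hcompN, hFqc]
      linear_combination (C ((-1:ℝ) ^ t) : ℝ[X]) * hW'
        - ((C (1 - a) - X : ℝ[X]) ^ (n + t)) * sign2
    obtain ⟨R, hR⟩ := dvdE
    refine ⟨R.comp (1 - X), ?_⟩
    have h2 := congrArg (fun p => Polynomial.comp p (1 - X)) hR
    rw [comp_one_sub_X_invol] at h2
    rw [h2, mul_comp, pow_comp, X_comp]
  -- D has degree < 2n
  have hdeg : D.natDegree < 2 * n := by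
    rw [hD]
    have h1 : (C ((-1 : ℝ) ^ t) * (Fq n k (1 - a)).comp (1 - X)).natDegree ≤ 2 * n - 1 := by
      refine (natDegree_C_mul_le _ _).trans (natDegree_comp_le.trans ?_)
      rw [natDegree_one_sub_X, mul_one]
      exact natDegree_Fq_le n k (by omega) _
    have h2 : (C ((-1 : ℝ) ^ (k + t)) * Fq n k a).natDegree ≤ 2 * n - 1 :=
      (natDegree_C_mul_le _ _).trans (natDegree_Fq_le n k (by omega) _)
    have h3 : (C ((-1 : ℝ) ^ n) * (C a - X) ^ (n + t)).natDegree ≤ 2 * n - 1 := by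
      refine (natDegree_C_mul_le _ _).trans (natDegree_pow_le.trans ?_)
      have hd1 : (C a - X : ℝ[X]).natDegree ≤ 1 := by
        refine (natDegree_sub_le _ _).trans ?_
        simp [natDegree_C]
      calc (n + t) * (C a - X : ℝ[X]).natDegree ≤ (n + t) * 1 := Nat.mul_le_mul_left _ hd1
        _ ≤ 2 * n - 1 := by omega
    have := (natDegree_sub_le _ _).trans
      (max_le ((natDegree_sub_le _ _).trans (max_le h1 h2)) h3)
    omega
  -- coprimality and conclusion
  have hcop : IsCoprime ((X : ℝ[X]) ^ n) ((1 - X : ℝ[X]) ^ n) :=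
    IsCoprime.pow ⟨1, 1, by ring⟩
  have hdvd : (X : ℝ[X]) ^ n * (1 - X) ^ n ∣ D := hcop.mul_dvd dvd1 dvd2
  have hD0 : D = 0 := by
    by_contra h0
    have hle := Polynomial.natDegree_le_of_dvd hdvd h0
    have hXn : ((X : ℝ[X]) ^ n * (1 - X) ^ n).natDegree = 2 * n := by
      rw [natDegree_mul (pow_ne_zero _ X_ne_zero) (pow_ne_zero _ ?_)]
      · rw [natDegree_X_pow, natDegree_pow, natDegree_one_sub_X]; omega
      · intro h
        have h2 := congrArg Polynomial.natDegree h
        rw [natDegree_one_sub_X, natDegree_zero] at h2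
        omega
    omega
  rw [hD] at hD0
  linear_combination hD0

noncomputable def QG1 (n k : ℕ) (a : ℝ) : ℝ[X] :=
  C ((-1 : ℝ) ^ (n - k - 1) / (Nat.factorial (2 * n - k - 1) : ℝ)) *
    (Fq n k (1 - a)).comp (1 - X)

noncomputable def QG2 (n k : ℕ) (a : ℝ) : ℝ[X] :=
  C ((-1 : ℝ) ^ (n - 1) / (Nat.factorial (2 * n - k - 1) : ℝ)) * Fq n k a

lemma Fq_eval (n k : ℕ) (b x : ℝ) :
    (Fq n k b).eval x = b ^ (n - k) * ((1 - x) ^ n * hpoly n k x b) := by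
  unfold Fq
  rw [eval_mul, eval_C, eval_mul, eval_pow, eval_sub, eval_one, eval_X, Hp_eval]

lemma G1_eq (n k : ℕ) (a : ℝ) : G1 n k a = fun x => (QG1 n k a).eval x := by
  funext x
  unfold G1 QG1
  rw [eval_mul, eval_C, eval_comp, eval_sub, eval_one, eval_X, Fq_eval]
  rw [show (1 - (1 - x)) = x by ring]
  ring

lemma G2_eq (n k : ℕ) (a : ℝ) : G2 n k a = fun x => (QG2 n k a).eval x := by
  funext x
  unfold G2 QG2
  rw [eval_mul, eval_C, Fq_eval]
  ring

lemma iteratedDeriv_polyeval (j : ℕ) : ∀ p : ℝ[X],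
    iteratedDeriv j (fun x => p.eval x) = fun x => (derivative^[j] p).eval x := by
  induction j with
  | zero => intro p; simp [iteratedDeriv_zero]
  | succ j ih =>
    intro p
    rw [iteratedDeriv_succ', Function.iterate_succ_apply]
    rw [show (deriv fun x => p.eval x) = fun x => (derivative p).eval x from
      funext fun x => Polynomial.deriv p]
    exact ih (derivative p)

lemma natDegree_QG2_lt (n k : ℕ) (hn : 1 ≤ n) (a : ℝ) :
    (derivative^[n] (QG2 n k a)).natDegree < n := by
  have h1 : (QG2 n k a).natDegree ≤ 2 * n - 1 :=
    (natDegree_C_mul_le _ _).trans (natDegree_Fq_le n k hn a)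
  have := Polynomial.natDegree_iterate_derivative (QG2 n k a) n
  omega

/-- The kernel identity: difference of the n-th derivatives of the two spline pieces. -/
lemma kernel_eval (n k : ℕ) (hn : 1 ≤ n) (hk : k + 1 ≤ n) (a x : ℝ) :
    iteratedDeriv n (G1 n k a) x - iteratedDeriv n (G2 n k a) x
      = (a - x) ^ (n - 1 - k) / (Nat.factorial (n - 1 - k) : ℝ) := by
  obtain ⟨t, ht⟩ : ∃ t, n = k + t + 1 := ⟨n - k - 1, by omega⟩
  subst ht
  set n := k + t + 1 with hn'
  rw [G1_eq, G2_eq, iteratedDeriv_polyeval, iteratedDeriv_polyeval]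
  rw [show n - 1 - k = t by omega]
  -- difference of the iterated derivatives
  have hdiff : (derivative^[n] (QG1 n k a)).eval x - (derivative^[n] (QG2 n k a)).eval x
      = (derivative^[n] (QG1 n k a - QG2 n k a)).eval x := by
    rw [Polynomial.iterate_derivative_sub, eval_sub]
  rw [hdiff]
  -- the polynomial identity
  have hid : QG1 n k a - QG2 n k a
      = C ((-1 : ℝ) ^ n / (Nat.factorial (2 * n - k - 1) : ℝ)) * (C a - X) ^ (2 * n - 1 - k) := by
    unfold QG1 QG2
    have hmp := main_poly_id n k (by omega) hk a
    have e1 : ((-1 : ℝ) ^ (n - k - 1) / (Nat.factorial (2 * n - k - 1) : ℝ))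
        = (1 / (Nat.factorial (2 * n - k - 1) : ℝ)) * (-1 : ℝ) ^ (n - k - 1) := by ring
    have e2 : ((-1 : ℝ) ^ (n - 1) / (Nat.factorial (2 * n - k - 1) : ℝ))
        = (1 / (Nat.factorial (2 * n - k - 1) : ℝ)) * (-1 : ℝ) ^ (n - 1) := by ring
    have e3 : ((-1 : ℝ) ^ n / (Nat.factorial (2 * n - k - 1) : ℝ))
        = (1 / (Nat.factorial (2 * n - k - 1) : ℝ)) * (-1 : ℝ) ^ n := by ring
    rw [e1, e2, e3, map_mul, map_mul, map_mul]
    calc C (1 / (Nat.factorial (2 * n - k - 1) : ℝ)) * C ((-1 : ℝ) ^ (n - k - 1)) *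
          (Fq n k (1 - a)).comp (1 - X)
        - C (1 / (Nat.factorial (2 * n - k - 1) : ℝ)) * C ((-1 : ℝ) ^ (n - 1)) * Fq n k a
        = C (1 / (Nat.factorial (2 * n - k - 1) : ℝ)) *
          (C ((-1 : ℝ) ^ (n - k - 1)) * (Fq n k (1 - a)).comp (1 - X)
            - C ((-1 : ℝ) ^ (n - 1)) * Fq n k a) := by ring
      _ = C (1 / (Nat.factorial (2 * n - k - 1) : ℝ)) *
          (C ((-1 : ℝ) ^ n) * (C a - X) ^ (2 * n - 1 - k)) := by rw [hmp]
      _ = C (1 / (Nat.factorial (2 * n - k - 1) : ℝ)) * C ((-1 : ℝ) ^ n) *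
          (C a - X) ^ (2 * n - 1 - k) := by ring
  rw [hid]
  -- compute the iterated derivative of the power
  have hpow : ((C a - X : ℝ[X]) ^ (2 * n - 1 - k))
      = C ((-1 : ℝ) ^ (2 * n - 1 - k)) * (X - C a) ^ (2 * n - 1 - k) := by
    have : (C a - X : ℝ[X]) = C (-1 : ℝ) * (X - C a) := by
      rw [map_neg, map_one]; ring
    rw [this, mul_pow, ← C_pow]
  rw [Polynomial.iterate_derivative_C_mul, hpow, Polynomial.iterate_derivative_C_mul,
    Polynomial.iterate_derivative_X_sub_pow]
  rw [eval_mul, eval_C, eval_mul, eval_C, eval_smul, eval_pow, eval_sub, eval_X, eval_C]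
  rw [show 2 * n - 1 - k - n = t by omega, show 2 * n - 1 - k = n + t by omega]
  have hfac : (Nat.factorial (2 * n - k - 1) : ℝ)
      = (Nat.factorial t : ℝ) * ((n + t).descFactorial n : ℝ) := by
    rw [← Nat.cast_mul]
    congr 1
    rw [show 2 * n - k - 1 = n + t by omega]
    have h := Nat.factorial_mul_descFactorial (n := n + t) (k := n) (by omega)
    rw [show n + t - n = t by omega] at h
    exact h.symm
  have hsign : ((-1 : ℝ) ^ n) * ((-1 : ℝ) ^ (n + t)) * ((x - a) ^ t) = (a - x) ^ t := by
    have h1 : ((x - a) : ℝ) ^ t = (-1 : ℝ) ^ t * (a - x) ^ t := by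
      rw [← neg_sub a x, neg_pow]
    rw [h1, show ((-1 : ℝ) ^ n) * ((-1 : ℝ) ^ (n + t)) * ((-1 : ℝ) ^ t * (a - x) ^ t)
      = ((-1 : ℝ) ^ (n + (n + t) + t)) * (a - x) ^ t by rw [pow_add, pow_add]; ring,
      show n + (n + t) + t = 2 * (n + t) by omega, pow_mul, neg_one_sq, one_pow, one_mul]
  have hne1 : (Nat.factorial t : ℝ) ≠ 0 := Nat.cast_ne_zero.2 (Nat.factorial_ne_zero t)
  have hne2 : (((n + t).descFactorial n : ℝ)) ≠ 0 := by
    rw [Nat.cast_ne_zero]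
    intro h
    rw [Nat.descFactorial_eq_zero_iff_lt] at h
    omega
  rw [nsmul_eq_mul, hfac]
  set dF : ℝ := (((n + t).descFactorial n : ℕ) : ℝ) with hdF
  set tf : ℝ := ((Nat.factorial t : ℕ) : ℝ) with htf
  calc (-1 : ℝ) ^ n / (tf * dF) * ((-1 : ℝ) ^ (n + t) * (dF * (x - a) ^ t))
      = ((-1 : ℝ) ^ n * ((-1 : ℝ) ^ (n + t)) * (x - a) ^ t) * (dF / (dF * tf)) := by
        ring
    _ = (a - x) ^ t * (dF / (dF * tf)) := by rw [hsign]
    _ = (a - x) ^ t * (1 / tf) := by rw [← div_div, div_self hne2]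
    _ = (a - x) ^ t / tf := by rw [mul_one_div]

section Analysis

open Set MeasureTheory intervalIntegral

variable {n : ℕ} {f : ℝ → ℝ}

lemma contF (hf : ContDiffOn ℝ n f (Set.Icc 0 1)) {j : ℕ} (hj : j ≤ n) :
    ContinuousOn (iteratedDerivWithin j f (Set.Icc 0 1)) (Set.Icc 0 1) :=
  hf.continuousOn_iteratedDerivWithin (by exact_mod_cast hj) uniqueDiffOn_Icc_zero_one

lemma hasDerivAtF (hf : ContDiffOn ℝ n f (Set.Icc 0 1)) {j : ℕ} (hj : j + 1 ≤ n)
    {x : ℝ} (hx : x ∈ Set.Ioo (0 : ℝ) 1) :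
    HasDerivAt (iteratedDerivWithin j f (Set.Icc 0 1))
      (iteratedDerivWithin (j + 1) f (Set.Icc 0 1) x) x := by
  have hU : UniqueDiffOn ℝ (Set.Icc (0 : ℝ) 1) := uniqueDiffOn_Icc_zero_one
  have hxI : x ∈ Set.Icc (0 : ℝ) 1 := ⟨hx.1.le, hx.2.le⟩
  have hmem : Set.Icc (0 : ℝ) 1 ∈ nhds x := Icc_mem_nhds hx.1 hx.2
  have hdiff : DifferentiableWithinAt ℝ (iteratedDerivWithin j f (Set.Icc 0 1))
      (Set.Icc 0 1) x :=
    hf.differentiableOn_iteratedDerivWithin (by exact_mod_cast hj) hU x hxI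
  have hda := hdiff.differentiableAt hmem
  have h1 : iteratedDerivWithin (j + 1) f (Set.Icc 0 1) x
      = deriv (iteratedDerivWithin j f (Set.Icc 0 1)) x := by
    rw [iteratedDerivWithin_succ, derivWithin_of_mem_nhds hmem]
  rw [h1]
  exact hda.hasDerivAt

/-- Integration by parts against a globally differentiable function. -/
lemma parts (hf : ContDiffOn ℝ n f (Set.Icc 0 1)) {j : ℕ} (hj : j + 1 ≤ n)
    {c d : ℝ} (hc : 0 ≤ c) (hd : d ≤ 1) (hcd : c ≤ d)
    (v v' : ℝ → ℝ) (hv : ∀ y, HasDerivAt v (v' y) y)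
    (hvc : Continuous v) (hv'c : Continuous v') :
    ∫ x in c..d, (iteratedDerivWithin (j + 1) f (Set.Icc 0 1) x * v x
        + iteratedDerivWithin j f (Set.Icc 0 1) x * v' x)
      = iteratedDerivWithin j f (Set.Icc 0 1) d * v d
        - iteratedDerivWithin j f (Set.Icc 0 1) c * v c := by
  have hsub : Set.Icc c d ⊆ Set.Icc (0 : ℝ) 1 := Set.Icc_subset_Icc hc hd
  apply integral_eq_sub_of_hasDeriv_right_of_le hcd
  · exact ((contF hf (by omega)).mono hsub).mul hvc.continuousOn
  · intro x hx
    have hx01 : x ∈ Set.Ioo (0 : ℝ) 1 :=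
      ⟨lt_of_le_of_lt hc hx.1, lt_of_lt_of_le hx.2 hd⟩
    exact (((hasDerivAtF hf hj hx01).mul (hv x))).hasDerivWithinAt
  · apply ContinuousOn.intervalIntegrable
    rw [Set.uIcc_of_le hcd]
    exact (((contF hf hj).mono hsub).mul hvc.continuousOn).add
      (((contF hf (by omega)).mono hsub).mul hv'c.continuousOn)

/-- orthogonality to polynomials of degree < j -/
lemma orth (hf : ContDiffOn ℝ n f (Set.Icc 0 1))
    (hbc : ∀ j < n, iteratedDerivWithin j f (Set.Icc 0 1) 0 = 0 ∧
      iteratedDerivWithin j f (Set.Icc 0 1) 1 = 0) :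
    ∀ j, j ≤ n → ∀ R : ℝ[X], R.natDegree < j →
      ∫ x in (0 : ℝ)..1, iteratedDerivWithin j f (Set.Icc 0 1) x * R.eval x = 0 := by
  intro j
  induction j with
  | zero => intro _ R hR; exact absurd hR (Nat.not_lt_zero _)
  | succ j ih =>
    intro hjn R hR
    have hpart := parts hf hjn (le_refl (0:ℝ)) (le_refl (1:ℝ)) zero_le_one
      (fun x => R.eval x) (fun x => (derivative R).eval x)
      (fun y => Polynomial.hasDerivAt R y) R.continuous (derivative R).continuous
    rw [(hbc j (by omega)).1, (hbc j (by omega)).2, zero_mul, zero_mul, sub_zero] at hpart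
    have hint1 : IntervalIntegrable
        (fun x => iteratedDerivWithin (j + 1) f (Set.Icc 0 1) x * R.eval x)
        volume (0 : ℝ) 1 := by
      apply ContinuousOn.intervalIntegrable
      rw [Set.uIcc_of_le zero_le_one]
      exact (contF hf hjn).mul R.continuous.continuousOn
    have hint2 : IntervalIntegrable
        (fun x => iteratedDerivWithin j f (Set.Icc 0 1) x * (derivative R).eval x)
        volume (0 : ℝ) 1 := by
      apply ContinuousOn.intervalIntegrable
      rw [Set.uIcc_of_le zero_le_one]
      exact (contF hf (by omega)).mul (derivative R).continuous.continuousOn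
    rw [integral_add hint1 hint2] at hpart
    have h2 : ∫ x in (0 : ℝ)..1,
        iteratedDerivWithin j f (Set.Icc 0 1) x * (derivative R).eval x = 0 := by
      by_cases h0 : R.natDegree = 0
      · obtain ⟨c, rfl⟩ := Polynomial.natDegree_eq_zero.mp h0
        simp
      · exact ih (by omega) (derivative R)
          (lt_of_lt_of_le (Polynomial.natDegree_derivative_lt h0) (by omega))
    rw [h2, add_zero] at hpart
    exact hpart

end Analysis

section Taylor

open Set MeasureTheory intervalIntegral

variable {n k : ℕ} {f : ℝ → ℝ} {a : ℝ}

lemma taylor_step (hf : ContDiffOn ℝ n f (Set.Icc 0 1))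
    (hbc : ∀ j < n, iteratedDerivWithin j f (Set.Icc 0 1) 0 = 0 ∧
      iteratedDerivWithin j f (Set.Icc 0 1) 1 = 0)
    (ha : a ∈ Set.Ioo (0 : ℝ) 1) :
    ∀ i, k + 1 + i ≤ n →
      iteratedDerivWithin k f (Set.Icc 0 1) a
        = ∫ x in (0 : ℝ)..a, iteratedDerivWithin (k + 1 + i) f (Set.Icc 0 1) x *
            ((a - x) ^ i / (Nat.factorial i : ℝ)) := by
  intro i
  induction i with
  | zero =>
    intro hi
    simp only [pow_zero, Nat.factorial_zero, Nat.cast_one, div_one, mul_one, Nat.add_zero]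
    have hFTC := integral_eq_sub_of_hasDeriv_right_of_le ha.1.le
      (f := iteratedDerivWithin k f (Set.Icc 0 1))
      (f' := iteratedDerivWithin (k + 1) f (Set.Icc 0 1))
      ((contF hf (by omega)).mono (Set.Icc_subset_Icc le_rfl ha.2.le))
      (fun x hx => ((hasDerivAtF hf (by omega)
        ⟨hx.1, lt_trans hx.2 ha.2⟩).hasDerivWithinAt))
      (by
        apply ContinuousOn.intervalIntegrable
        rw [Set.uIcc_of_le ha.1.le]
        exact (contF hf (by omega)).mono (Set.Icc_subset_Icc le_rfl ha.2.le))
    rw [hFTC, (hbc k (by omega)).1, sub_zero]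
  | succ i ih =>
    intro hi
    have hder : ∀ y : ℝ, HasDerivAt (fun x => -((a - x) ^ (i + 1) / (Nat.factorial (i + 1) : ℝ)))
        ((a - y) ^ i / (Nat.factorial i : ℝ)) y := by
      intro y
      have h1 : HasDerivAt (fun x : ℝ => a - x) (-1) y := by
        simpa using (hasDerivAt_id y).const_sub a
      have h2 := (h1.pow (i + 1)).div_const ((Nat.factorial (i + 1) : ℝ))
      have h3 := h2.neg
      refine HasDerivAt.congr_deriv h3 ?_
      have hne : ((i : ℝ) + 1) ≠ 0 := by positivity
      have hfacne : (Nat.factorial i : ℝ) ≠ 0 := Nat.cast_ne_zero.2 (Nat.factorial_ne_zero i)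
      rw [Nat.factorial_succ]
      push_cast
      field_simp
    have hcv : Continuous fun x : ℝ => -((a - x) ^ (i + 1) / (Nat.factorial (i + 1) : ℝ)) := by
      continuity
    have hcv' : Continuous fun x : ℝ => (a - x) ^ i / (Nat.factorial i : ℝ) := by
      continuity
    have hpart := parts hf (show (k + 1 + i) + 1 ≤ n from hi) le_rfl ha.2.le ha.1.le
      (fun x => -((a - x) ^ (i + 1) / (Nat.factorial (i + 1) : ℝ)))
      (fun x => (a - x) ^ i / (Nat.factorial i : ℝ))
      hder hcv hcv'
    simp only [(hbc (k + 1 + i) (by omega)).1, zero_mul, sub_zero, sub_self,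
      zero_pow (Nat.succ_ne_zero i), zero_div, neg_zero, mul_zero] at hpart
    have hint1 : IntervalIntegrable
        (fun x => iteratedDerivWithin (k + 1 + i + 1) f (Set.Icc 0 1) x *
          -((a - x) ^ (i + 1) / (Nat.factorial (i + 1) : ℝ))) volume (0 : ℝ) a := by
      apply ContinuousOn.intervalIntegrable
      rw [Set.uIcc_of_le ha.1.le]
      exact ((contF hf hi).mono (Set.Icc_subset_Icc le_rfl ha.2.le)).mul hcv.continuousOn
    have hint2 : IntervalIntegrable
        (fun x => iteratedDerivWithin (k + 1 + i) f (Set.Icc 0 1) x *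
          ((a - x) ^ i / (Nat.factorial i : ℝ))) volume (0 : ℝ) a := by
      apply ContinuousOn.intervalIntegrable
      rw [Set.uIcc_of_le ha.1.le]
      exact ((contF hf (by omega)).mono (Set.Icc_subset_Icc le_rfl ha.2.le)).mul
        hcv'.continuousOn
    rw [integral_add hint1 hint2] at hpart
    have hneg : (∫ x in (0:ℝ)..a, iteratedDerivWithin (k + 1 + i + 1) f (Set.Icc 0 1) x *
          -((a - x) ^ (i + 1) / (Nat.factorial (i + 1) : ℝ)))
        = -∫ x in (0:ℝ)..a, iteratedDerivWithin (k + 1 + (i + 1)) f (Set.Icc 0 1) x *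
          ((a - x) ^ (i + 1) / (Nat.factorial (i + 1) : ℝ)) := by
      rw [← intervalIntegral.integral_neg]
      congr 1
      funext x
      ring_nf
    rw [hneg] at hpart
    have := ih (by omega)
    rw [this]
    linarith [hpart]

end Taylor

theorem stmt0 (n k : ℕ) (hn : 1 ≤ n) (hk : k ≤ n - 1) (a : ℝ) (ha : a ∈ Set.Ioo (0 : ℝ) 1)
    (f : ℝ → ℝ) (hf : ContDiffOn ℝ n f (Set.Icc 0 1))
    (hbc : ∀ j < n, iteratedDerivWithin j f (Set.Icc 0 1) 0 = 0 ∧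
      iteratedDerivWithin j f (Set.Icc 0 1) 1 = 0) :
    iteratedDerivWithin k f (Set.Icc 0 1) a =
      (∫ x in (0 : ℝ)..a,
        iteratedDerivWithin n f (Set.Icc 0 1) x * iteratedDeriv n (G1 n k a) x) +
      ∫ x in a..(1 : ℝ),
        iteratedDerivWithin n f (Set.Icc 0 1) x * iteratedDeriv n (G2 n k a) x := by
  have hk' : k + 1 ≤ n := by omega
  have hG1 : iteratedDeriv n (G1 n k a)
      = fun x => (Polynomial.derivative^[n] (QG1 n k a)).eval x := by
    rw [G1_eq, iteratedDeriv_polyeval]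
  have hG2 : iteratedDeriv n (G2 n k a)
      = fun x => (Polynomial.derivative^[n] (QG2 n k a)).eval x := by
    rw [G2_eq, iteratedDeriv_polyeval]
  have hker : ∀ x : ℝ, (Polynomial.derivative^[n] (QG1 n k a)).eval x
      = (Polynomial.derivative^[n] (QG2 n k a)).eval x
        + (a - x) ^ (n - 1 - k) / (Nat.factorial (n - 1 - k) : ℝ) := by
    intro x
    have h := kernel_eval n k hn hk' a x
    rw [hG1, hG2] at h
    simp only at h
    linarith
  have hFn : ContinuousOn (iteratedDerivWithin n f (Set.Icc 0 1)) (Set.Icc 0 1) :=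
    contF hf le_rfl
  have hKc : Continuous fun x : ℝ => (a - x) ^ (n - 1 - k) / (Nat.factorial (n - 1 - k) : ℝ) := by
    continuity
  have hR2c : Continuous fun x : ℝ => (Polynomial.derivative^[n] (QG2 n k a)).eval x :=
    Polynomial.continuous _
  have hint_ker : IntervalIntegrable (fun x => iteratedDerivWithin n f (Set.Icc 0 1) x *
      ((a - x) ^ (n - 1 - k) / (Nat.factorial (n - 1 - k) : ℝ))) MeasureTheory.volume 0 a := by
    apply ContinuousOn.intervalIntegrable
    rw [Set.uIcc_of_le ha.1.le]
    exact (hFn.mono (Set.Icc_subset_Icc le_rfl ha.2.le)).mul hKc.continuousOn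
  have hint_2a : IntervalIntegrable (fun x => iteratedDerivWithin n f (Set.Icc 0 1) x *
      (Polynomial.derivative^[n] (QG2 n k a)).eval x) MeasureTheory.volume 0 a := by
    apply ContinuousOn.intervalIntegrable
    rw [Set.uIcc_of_le ha.1.le]
    exact (hFn.mono (Set.Icc_subset_Icc le_rfl ha.2.le)).mul hR2c.continuousOn
  have hint_2b : IntervalIntegrable (fun x => iteratedDerivWithin n f (Set.Icc 0 1) x *
      (Polynomial.derivative^[n] (QG2 n k a)).eval x) MeasureTheory.volume a 1 := by
    apply ContinuousOn.intervalIntegrable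
    rw [Set.uIcc_of_le ha.2.le]
    exact (hFn.mono (Set.Icc_subset_Icc ha.1.le le_rfl)).mul hR2c.continuousOn
  simp only [hG1, hG2]
  have key1 : (∫ x in (0 : ℝ)..a, iteratedDerivWithin n f (Set.Icc 0 1) x *
        (Polynomial.derivative^[n] (QG1 n k a)).eval x)
      = (∫ x in (0 : ℝ)..a, iteratedDerivWithin n f (Set.Icc 0 1) x *
          ((a - x) ^ (n - 1 - k) / (Nat.factorial (n - 1 - k) : ℝ)))
        + ∫ x in (0 : ℝ)..a, iteratedDerivWithin n f (Set.Icc 0 1) x *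
          (Polynomial.derivative^[n] (QG2 n k a)).eval x := by
    rw [← intervalIntegral.integral_add hint_ker hint_2a]
    apply intervalIntegral.integral_congr
    intro x _
    simp only
    rw [hker x]
    ring
  have key2 : (∫ x in (0 : ℝ)..a, iteratedDerivWithin n f (Set.Icc 0 1) x *
        (Polynomial.derivative^[n] (QG2 n k a)).eval x)
      + (∫ x in a..(1 : ℝ), iteratedDerivWithin n f (Set.Icc 0 1) x *
        (Polynomial.derivative^[n] (QG2 n k a)).eval x) = 0 := by
    rw [intervalIntegral.integral_add_adjacent_intervals hint_2a hint_2b]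
    exact orth hf hbc n le_rfl _ (natDegree_QG2_lt n k hn a)
  have key3 := taylor_step (k := k) hf hbc ha (n - 1 - k) (by omega)
  rw [show k + 1 + (n - 1 - k) = n by omega] at key3
  rw [key1]
  linarith [key2, key3]
end

section
/- For all integers n ≥ 1 and 0 ≤ k ≤ n−1 the following identity of polynomials in the two variables x and a holds: (1−a)^{n−k}·x^n·h_{n,k}(1−x, 1−a) − (−1)^k·a^{n−k}·(1−x)^n·h_{n,k}(x, a) = (x−a)^{2n−k−1}. -/
open Finset

open Polynomial

noncomputable def gP (n l : ℕ) : Polynomial ℝ :=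
  ∑ m ∈ Finset.range (l+1), C ((n-1+m).choose m : ℝ) * X ^ m

-- coefficient identity from power series inverse
lemma vand (n d : ℕ) (hn : 1 ≤ n) :
    ∑ uv ∈ Finset.HasAntidiagonal.antidiagonal d,
      (((n-1+uv.1).choose uv.1 : ℝ)) * ((1 - X : Polynomial ℝ)^n).coeff uv.2
      = if d = 0 then 1 else 0 := by
  have h := PowerSeries.mk_add_choose_mul_one_sub_pow_eq_one (S := ℝ) (d := n - 1)
  have hn' : n - 1 + 1 = n := Nat.succ_pred_eq_of_pos hn
  rw [hn'] at h
  have h2 := congrArg (PowerSeries.coeff d) h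
  rw [PowerSeries.coeff_mul, PowerSeries.coeff_one] at h2
  rw [← h2]
  apply Finset.sum_congr rfl
  intro uv huv
  congr 1
  · rw [PowerSeries.coeff_mk]
    congr 1
    rw [← Nat.choose_symm (by omega : n - 1 ≤ n - 1 + uv.1)]
    congr 1
    omega
  · have : ((1 - X : Polynomial ℝ) : PowerSeries ℝ) = 1 - PowerSeries.X := by
      push_cast
      simp
    rw [← this, ← Polynomial.coe_pow, Polynomial.coeff_coe]

lemma gP_coeff (n l v : ℕ) (hv : v ≤ l) :
    (gP n l).coeff v = ((n-1+v).choose v : ℝ) := by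
  rw [gP, finset_sum_coeff]
  rw [Finset.sum_eq_single v]
  · simp
  · intro m _ hm
    simp [coeff_C_mul, coeff_X_pow, hm, Ne.symm hm]
  · intro h
    exact absurd (Finset.mem_range.2 (by omega)) h

lemma lemA (n : ℕ) (hn : 1 ≤ n) (l : ℕ) :
    ∃ T : Polynomial ℝ, (1 - X)^n * gP n l = 1 - X^(l+1) * T := by
  have hdvd : X^(l+1) ∣ (1 - (1 - X)^n * gP n l : Polynomial ℝ) := by
    rw [X_pow_dvd_iff]
    intro d hd
    rw [coeff_sub, coeff_mul]
    have h1 : ∑ uv ∈ Finset.HasAntidiagonal.antidiagonal d,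
        ((1 - X : Polynomial ℝ)^n).coeff uv.1 * (gP n l).coeff uv.2
        = if d = 0 then 1 else 0 := by
      rw [← vand n d hn]
      rw [← Finset.Nat.sum_antidiagonal_swap]
      apply Finset.sum_congr rfl
      intro uv huv
      rw [Finset.HasAntidiagonal.mem_antidiagonal] at huv
      simp only [Prod.fst_swap, Prod.snd_swap]
      rw [gP_coeff n l uv.1 (by omega), mul_comm]
    rw [h1]
    rcases Nat.eq_zero_or_pos d with h | h
    · simp [h]
    · simp [Nat.pos_iff_ne_zero.mp h, coeff_one, (by omega : d ≠ 0)]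
  obtain ⟨T, hT⟩ := hdvd
  exact ⟨T, by linear_combination -hT⟩

noncomputable def HP (n k : ℕ) (a : ℝ) : Polynomial ℝ :=
  ∑ l ∈ Finset.range n,
    C ((-1:ℝ)^(n-1-l) * ((2*n-1-k).choose (n-1-l) : ℝ) * a^l) * X^(n-1-l) * gP n l

noncomputable def SP (n k : ℕ) (a : ℝ) : Polynomial ℝ :=
  ∑ l ∈ Finset.range n,
    C ((-1:ℝ)^(n-1-l) * ((2*n-1-k).choose (n-1-l) : ℝ) * a^l) * X^(n-1-l)

lemma lemB (n k : ℕ) (hn : 1 ≤ n) (a : ℝ) :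
    ∃ B : Polynomial ℝ, (1-X)^n * HP n k a = SP n k a + X^n * B := by
  have hT : ∀ l : ℕ, ∃ T : Polynomial ℝ, (1 - X)^n * gP n l = 1 - X^(l+1) * T :=
    lemA n hn
  choose T hT using hT
  refine ⟨-∑ l ∈ Finset.range n,
    C ((-1:ℝ)^(n-1-l) * ((2*n-1-k).choose (n-1-l) : ℝ) * a^l) * T l, ?_⟩
  rw [HP, Finset.mul_sum]
  have step : ∀ l ∈ Finset.range n,
      (1-X)^n * (C ((-1:ℝ)^(n-1-l) * ((2*n-1-k).choose (n-1-l) : ℝ) * a^l) * X^(n-1-l) * gP n l)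
      = C ((-1:ℝ)^(n-1-l) * ((2*n-1-k).choose (n-1-l) : ℝ) * a^l) * X^(n-1-l)
        - X^n * (C ((-1:ℝ)^(n-1-l) * ((2*n-1-k).choose (n-1-l) : ℝ) * a^l) * T l) := by
    intro l hl
    rw [Finset.mem_range] at hl
    have hx : (X : Polynomial ℝ)^(n-1-l) * X^(l+1) = X^n := by
      rw [← pow_add]; congr 1; omega
    set c : ℝ := (-1:ℝ)^(n-1-l) * ((2*n-1-k).choose (n-1-l) : ℝ) * a^l
    linear_combination (C c * X^(n-1-l)) * hT l - (C c * T l) * hx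
  rw [Finset.sum_congr rfl step, Finset.sum_sub_distrib, ← SP, mul_neg,
    Finset.mul_sum, ← sub_eq_add_neg]

lemma SP_eq (n k : ℕ) (hn : 1 ≤ n) (a : ℝ) :
    SP n k a = ∑ j ∈ Finset.range n,
      C ((-1:ℝ)^j * ((2*n-1-k).choose j : ℝ) * a^(n-1-j)) * X^j := by
  rw [SP, ← Finset.sum_range_reflect
    (fun j => C ((-1:ℝ)^j * (((2*n-1-k).choose j : ℝ)) * a^(n-1-j)) * X^j) n]
  apply Finset.sum_congr rfl
  intro l hl
  rw [Finset.mem_range] at hl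
  rw [show n-1-(n-1-l) = l from by omega]

lemma lemC (n k : ℕ) (hn : 1 ≤ n) (hk : k ≤ n - 1) (a : ℝ) :
    ∃ B' : Polynomial ℝ, (X - C a)^(2*n-1-k)
      = C ((-1:ℝ)^(k+1) * a^(n-k)) * SP n k a + X^n * B' := by
  set N := 2*n-1-k with hN
  have hnN : n ≤ N := by omega
  have expand : (X - C a : Polynomial ℝ)^N
      = ∑ j ∈ Finset.range (N+1), X^j * (C (-a))^(N-j) * (N.choose j : Polynomial ℝ) := by
    rw [sub_eq_add_neg, ← C_neg, add_pow]
  rw [expand, show N + 1 = n + (N + 1 - n) by omega, Finset.sum_range_add]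
  refine ⟨∑ i ∈ Finset.range (N+1-n), X^i * (C (-a))^(N-(n+i)) * (N.choose (n+i) : Polynomial ℝ), ?_⟩
  congr 1
  · -- first chunk equals C(...) * SP
    rw [SP_eq n k hn a, Finset.mul_sum]
    apply Finset.sum_congr rfl
    intro j hj
    rw [Finset.mem_range] at hj
    simp only [← hN]
    have hsign : ((-1:ℝ))^(k+1) * (-1)^j = (-1)^(N-j) := by
      rw [← pow_add]
      rcases Nat.even_or_odd (k + j) with ⟨r, hr⟩ | ⟨r, hr⟩
      · rw [Odd.neg_one_pow ⟨r, by omega⟩, Odd.neg_one_pow ⟨n-1-r, by omega⟩]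
      · rw [Even.neg_one_pow ⟨r+1, by omega⟩, Even.neg_one_pow ⟨n-1-r, by omega⟩]
    have hexp : a^(n-k) * a^(n-1-j) = a^(N-j) := by
      rw [← pow_add]; congr 1; omega
    have hCneg : ((C (-a))^(N-j) : Polynomial ℝ) = C ((-1:ℝ)^(N-j) * a^(N-j)) := by
      rw [← C_pow]; congr 1; rw [neg_pow]
    rw [hCneg, (C_eq_natCast (N.choose j)).symm,
      mul_assoc, ← C_mul, ← mul_assoc (C ((-1:ℝ)^(k+1) * a^(n-k))), ← C_mul, mul_comm (X^j)]
    congr 1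
    rw [← hsign, ← hexp]
    ring
  · -- second chunk is X^n * B'
    rw [Finset.mul_sum]
    apply Finset.sum_congr rfl
    intro i hi
    rw [pow_add]
    ring

lemma keyDvd (n k : ℕ) (hn : 1 ≤ n) (hk : k ≤ n - 1) (a : ℝ) :
    (X : Polynomial ℝ)^n ∣
      ((X - C a)^(2*n-1-k) + C ((-1:ℝ)^k * a^(n-k)) * ((1-X)^n * HP n k a)) := by
  obtain ⟨B, hB⟩ := lemB n k hn a
  obtain ⟨B', hB'⟩ := lemC n k hn hk a
  refine ⟨B' + C ((-1:ℝ)^k * a^(n-k)) * B, ?_⟩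
  have hC : C ((-1:ℝ)^(k+1) * a^(n-k)) = - C ((-1:ℝ)^k * a^(n-k)) := by
    rw [show ((-1:ℝ)^(k+1) * a^(n-k)) = -((-1:ℝ)^k * a^(n-k)) by ring, map_neg]
  rw [hB, hB', hC]
  ring

/-- The difference polynomial. -/
noncomputable def FP (n k : ℕ) (a : ℝ) : Polynomial ℝ :=
  C ((1-a)^(n-k)) * X^n * ((HP n k (1-a)).comp (1 - X))
    - ((X - C a)^(2*n-1-k) + C ((-1:ℝ)^k * a^(n-k)) * ((1-X)^n * HP n k a))

lemma Xn_dvd_FP (n k : ℕ) (hn : 1 ≤ n) (hk : k ≤ n - 1) (a : ℝ) :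
    (X : Polynomial ℝ)^n ∣ FP n k a := by
  apply dvd_sub
  · exact Dvd.dvd.mul_right (Dvd.dvd.mul_left (dvd_refl _) _) _
  · exact keyDvd n k hn hk a

lemma comp_FP (n k : ℕ) (hn : 1 ≤ n) (hk : k ≤ n - 1) (a : ℝ) :
    (FP n k a).comp (1 - X) =
      - (C ((-1:ℝ)^(k+1)) * ((X - C (1-a))^(2*n-1-k)
          + C ((-1:ℝ)^k * (1-a)^(n-k)) * ((1-X)^n * HP n k (1-a))))
      - C ((-1:ℝ)^k * a^(n-k)) * (X^n * ((HP n k a).comp (1 - X))) := by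
  have h1X : ((1 : Polynomial ℝ) - X).comp (1 - X) = X := by
    simp [sub_comp]
  have hcomp2 : ((HP n k (1-a)).comp (1 - X)).comp (1 - X) = HP n k (1-a) := by
    rw [Polynomial.comp_assoc, h1X, comp_X]
  have hsign : ((X : Polynomial ℝ) - C a).comp (1 - X) = -(X - C (1-a)) := by
    simp [sub_comp]
    ring
  have hone : ((-1 : Polynomial ℝ))^(2*n-1-k) = C ((-1:ℝ)^(k+1)) := by
    rw [show ((-1 : Polynomial ℝ)) = C (-1:ℝ) by simp, ← C_pow]
    congr 1
    rcases Nat.even_or_odd k with ⟨r, hr⟩ | ⟨r, hr⟩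
    · rw [Odd.neg_one_pow ⟨n-1-r, by omega⟩, Odd.neg_one_pow (⟨r, by omega⟩ : Odd (k+1))]
    · rw [Even.neg_one_pow ⟨n-1-r, by omega⟩, Even.neg_one_pow (⟨r+1, by omega⟩ : Even (k+1))]
  have hCC : C ((-1:ℝ)^(k+1)) * C ((-1:ℝ)^k * (1-a)^(n-k)) = - C ((1-a)^(n-k)) := by
    rw [← C_mul, ← map_neg]
    congr 1
    have h2 : (-1:ℝ)^k * (-1)^k = 1 := by
      rw [← pow_add]; exact Even.neg_one_pow ⟨k, rfl⟩
    rw [pow_succ]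
    linear_combination (-(1-a)^(n-k)) * h2
  have hneg : ((1:Polynomial ℝ) - X - C a)^(2*n-1-k)
      = C ((-1:ℝ)^(k+1)) * (X - C (1-a))^(2*n-1-k) := by
    rw [show (1:Polynomial ℝ) - X - C a = -(X - C (1-a)) by rw [map_sub, C_1]; ring,
      neg_pow, hone]
  simp only [FP, sub_comp, mul_comp, add_comp, pow_comp, C_comp, X_comp, one_comp]
  rw [hcomp2, hneg]
  linear_combination hCC * ((1-X)^n * HP n k (1-a))

lemma oneSubX_dvd_FP (n k : ℕ) (hn : 1 ≤ n) (hk : k ≤ n - 1) (a : ℝ) :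
    ((1 : Polynomial ℝ) - X)^n ∣ FP n k a := by
  have hdvd : (X : Polynomial ℝ)^n ∣ (FP n k a).comp (1 - X) := by
    rw [comp_FP n k hn hk a]
    apply dvd_sub
    · exact Dvd.dvd.neg_right (Dvd.dvd.mul_left (keyDvd n k hn hk (1-a)) _)
    · exact Dvd.dvd.mul_left (Dvd.dvd.mul_right (dvd_refl _) _) _
  obtain ⟨q, hq⟩ := hdvd
  have h1X : ((1 : Polynomial ℝ) - X).comp (1 - X) = X := by
    simp [sub_comp]
  have hFP : FP n k a = ((FP n k a).comp (1 - X)).comp (1 - X) := by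
    rw [Polynomial.comp_assoc, h1X, comp_X]
  rw [hFP, hq]
  exact ⟨q.comp (1 - X), by rw [mul_comp, pow_comp, X_comp]⟩

lemma gP_deg (n l : ℕ) : (gP n l).natDegree ≤ l := by
  apply Polynomial.natDegree_sum_le_of_forall_le
  intro m hm
  rw [Finset.mem_range] at hm
  exact (natDegree_C_mul_le _ _).trans ((natDegree_X_pow_le m).trans (by omega))

lemma HP_deg (n k : ℕ) (hn : 1 ≤ n) (a : ℝ) : (HP n k a).natDegree ≤ n - 1 := by
  apply Polynomial.natDegree_sum_le_of_forall_le
  intro l hl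
  rw [Finset.mem_range] at hl
  calc (C ((-1:ℝ)^(n-1-l) * ((2*n-1-k).choose (n-1-l) : ℝ) * a^l) * X^(n-1-l) * gP n l).natDegree
      ≤ (C ((-1:ℝ)^(n-1-l) * ((2*n-1-k).choose (n-1-l) : ℝ) * a^l) * X^(n-1-l)).natDegree
        + (gP n l).natDegree := natDegree_mul_le
    _ ≤ (n-1-l) + l := by
        gcongr
        · exact (natDegree_C_mul_le _ _).trans (natDegree_X_pow_le _)
        · exact gP_deg n l
    _ ≤ n - 1 := by omega

lemma oneSubX_deg : (1 - X : Polynomial ℝ).natDegree = 1 := by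
  rw [show (1 - X : Polynomial ℝ) = -(X - C 1) by rw [C_1]; ring, natDegree_neg,
    natDegree_X_sub_C]

lemma FP_deg (n k : ℕ) (hn : 1 ≤ n) (hk : k ≤ n - 1) (a : ℝ) :
    (FP n k a).natDegree < 2 * n := by
  have hHc : ((HP n k (1-a)).comp (1 - X)).natDegree ≤ n - 1 := by
    calc ((HP n k (1-a)).comp (1 - X)).natDegree
        ≤ (HP n k (1-a)).natDegree * (1 - X : Polynomial ℝ).natDegree := natDegree_comp_le
      _ ≤ (n-1) * 1 := by
          rw [oneSubX_deg]
          exact Nat.mul_le_mul_right 1 (HP_deg n k hn (1-a))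
      _ = n - 1 := by omega
  have h1 : (C ((1-a)^(n-k)) * X^n * ((HP n k (1-a)).comp (1 - X))).natDegree ≤ 2*n - 1 := by
    calc (C ((1-a)^(n-k)) * X^n * ((HP n k (1-a)).comp (1 - X))).natDegree
        ≤ (C ((1-a)^(n-k)) * X^n).natDegree + ((HP n k (1-a)).comp (1 - X)).natDegree :=
          natDegree_mul_le
      _ ≤ n + (n - 1) := by
          gcongr
          exact (natDegree_C_mul_le _ _).trans (natDegree_X_pow_le _)
      _ ≤ 2*n - 1 := by omega
  have h2 : (((X : Polynomial ℝ) - C a)^(2*n-1-k)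
      + C ((-1:ℝ)^k * a^(n-k)) * ((1-X)^n * HP n k a)).natDegree ≤ 2*n - 1 := by
    apply (natDegree_add_le _ _).trans
    apply max_le
    · apply (natDegree_pow _ _).trans_le ?_
      rw [natDegree_X_sub_C]
      omega
    · apply (natDegree_C_mul_le _ _).trans
      apply (natDegree_mul_le).trans
      have : ((1 - X : Polynomial ℝ)^n).natDegree ≤ n := by
        apply (natDegree_pow _ _).trans_le
        rw [oneSubX_deg]; omega
      have := HP_deg n k hn a
      omega
  have := natDegree_sub_le (C ((1-a)^(n-k)) * X^n * ((HP n k (1-a)).comp (1 - X)))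
    (((X : Polynomial ℝ) - C a)^(2*n-1-k) + C ((-1:ℝ)^k * a^(n-k)) * ((1-X)^n * HP n k a))
  rw [← FP] at this
  omega

lemma FP_zero (n k : ℕ) (hn : 1 ≤ n) (hk : k ≤ n - 1) (a : ℝ) : FP n k a = 0 := by
  have hco : IsCoprime ((X : Polynomial ℝ)^n) ((1 - X : Polynomial ℝ)^n) :=
    IsCoprime.pow ⟨1, 1, by ring⟩
  have hdvd : (X : Polynomial ℝ)^n * (1 - X)^n ∣ FP n k a :=
    hco.mul_dvd (Xn_dvd_FP n k hn hk a) (oneSubX_dvd_FP n k hn hk a)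
  have hdeg : ((X : Polynomial ℝ)^n * (1 - X)^n).natDegree = 2 * n := by
    rw [natDegree_mul (pow_ne_zero _ X_ne_zero) (pow_ne_zero _ (by
      intro h
      have := congrArg (Polynomial.eval 0) h
      simp at this)), natDegree_pow, natDegree_pow, natDegree_X, oneSubX_deg]
    omega
  exact Polynomial.eq_zero_of_dvd_of_natDegree_lt hdvd
    (by rw [hdeg]; exact FP_deg n k hn hk a)

lemma HP_eval (n k : ℕ) (x a : ℝ) : (HP n k a).eval x = hpoly n k x a := by
  rw [HP, hpoly, eval_finset_sum]
  apply Finset.sum_congr rfl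
  intro l hl
  rw [eval_mul, eval_mul, eval_C, eval_pow, eval_X, gP, eval_finset_sum]
  rw [Finset.sum_congr rfl (fun m _ => by rw [eval_mul, eval_C, eval_pow, eval_X])]
  ring

theorem stmt1 (n k : ℕ) (hn : 1 ≤ n) (hk : k ≤ n - 1) :
    ∀ x a : ℝ,
      (1 - a) ^ (n - k) * x ^ n * hpoly n k (1 - x) (1 - a) -
        (-1 : ℝ) ^ k * a ^ (n - k) * (1 - x) ^ n * hpoly n k x a =
      (x - a) ^ (2 * n - k - 1) := by
  intro x a
  have hz := FP_zero n k hn hk a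
  have he := congrArg (Polynomial.eval x) hz
  rw [FP] at he
  simp only [eval_sub, eval_add, eval_mul, eval_pow, eval_C, eval_X, eval_comp, eval_one,
    eval_zero] at he
  rw [HP_eval, HP_eval] at he
  rw [show 2 * n - k - 1 = 2 * n - 1 - k by omega]
  linear_combination he
end

section
/- Let n ≥ 4 be an integer, and set t₁(n) := (−(n−2)(2n−3) − √(3(n−2)(2n−3)))/(2(2n−1)(2n−3)) and t₂(n) := (−(n−2)(2n−3) + √(3(n−2)(2n−3)))/(2(2n−1)(2n−3)). Then f_{n,3}(t₁(n)) > f_{n,3}(t₂(n)). -/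
/-- The function `f_{n,3}(t)`, equal to `A²_{n,3}` (in the variable `t = a² − a`)
multiplied by `((n−2)!)²(2n−7)`. -/
noncomputable def f3 (n : ℕ) (t : ℝ) : ℝ :=
  -t ^ (2 * n - 7) *
    (4 * (2 * (n : ℝ) - 1) * (2 * (n : ℝ) - 3) ^ 2 * (2 * (n : ℝ) - 7) * t ^ 3 +
     12 * ((n : ℝ) - 1) * ((n : ℝ) - 2) * (2 * (n : ℝ) - 3) * (2 * (n : ℝ) - 7) * t ^ 2 +
     3 * ((n : ℝ) - 2) ^ 2 * (2 * (n : ℝ) - 3) * (2 * (n : ℝ) - 7) * t +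
     ((n : ℝ) - 2) ^ 2 * ((n : ℝ) - 3) ^ 2)

private lemma bern_aux (m : ℕ) : (0:ℝ) ≤ (m:ℝ) * ((m:ℝ) - 1) := by
  rcases m with _ | mm
  · norm_num
  · push_cast
    nlinarith [Nat.cast_nonneg (α := ℝ) mm]

private lemma bern (m : ℕ) (x : ℝ) (hx : 0 ≤ x) :
    1 + (m:ℝ) * x + (m:ℝ) * ((m:ℝ) - 1) / 2 * x ^ 2 ≤ (1 + x) ^ m := by
  induction m with
  | zero => norm_num
  | succ m ih =>
    have h1x : (0:ℝ) ≤ 1 + x := by linarith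
    have h2 : (1 + (m:ℝ) * x + (m:ℝ) * ((m:ℝ) - 1) / 2 * x ^ 2) * (1 + x)
        ≤ (1 + x) ^ m * (1 + x) := mul_le_mul_of_nonneg_right ih h1x
    rw [pow_succ]
    refine le_trans ?_ h2
    have h3 := bern_aux m
    push_cast
    nlinarith [mul_nonneg (mul_nonneg h3 hx) (sq_nonneg x)]

set_option maxHeartbeats 1600000 in
theorem stmt7 (n : ℕ) (hn : 4 ≤ n) :
    f3 n ((-(((n : ℝ) - 2) * (2 * (n : ℝ) - 3)) -
        Real.sqrt (3 * ((n : ℝ) - 2) * (2 * (n : ℝ) - 3))) /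
      (2 * (2 * (n : ℝ) - 1) * (2 * (n : ℝ) - 3))) >
    f3 n ((-(((n : ℝ) - 2) * (2 * (n : ℝ) - 3)) +
        Real.sqrt (3 * ((n : ℝ) - 2) * (2 * (n : ℝ) - 3))) /
      (2 * (2 * (n : ℝ) - 1) * (2 * (n : ℝ) - 3))) := by
  obtain ⟨N, hNdef⟩ : ∃ x : ℝ, (n:ℝ) = x := ⟨(n:ℝ), rfl⟩
  rw [hNdef]
  have hN : (4:ℝ) ≤ N := by rw [← hNdef]; exact_mod_cast hn
  set s : ℝ := Real.sqrt (3 * (N - 2) * (2 * N - 3)) with hsdef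
  have hSpos : 0 < 3 * (N - 2) * (2 * N - 3) := by nlinarith
  have hs0 : 0 < s := Real.sqrt_pos.mpr hSpos
  have hS : s ^ 2 = 6 * N ^ 2 - 21 * N + 18 := by
    rw [hsdef, Real.sq_sqrt hSpos.le]; ring
  have hsu : s < 5 * N / 2 := by
    have h1 : s ^ 2 < (5 * N / 2) ^ 2 := by nlinarith
    exact lt_of_pow_lt_pow_left₀ 2 (by nlinarith) h1
  have hsl : N ≤ s := by
    have h1 : N ^ 2 ≤ s ^ 2 := by nlinarith
    exact le_of_pow_le_pow_left₀ (by norm_num) hs0.le h1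
  set k : ℕ := 2 * n - 7 with hkdef
  have hodd : Odd k := ⟨n - 4, by omega⟩
  have hK : (k:ℝ) = 2 * N - 7 := by
    rw [hkdef, Nat.cast_sub (by omega : 7 ≤ 2 * n)]
    push_cast
    rw [hNdef]
  have hA0 : 0 < 2 * (2 * N - 1) * (2 * N - 3) := by nlinarith
  have hbs : s < (N - 2) * (2 * N - 3) := by nlinarith
  have hbspos : 0 < (N - 2) * (2 * N - 3) - s := by linarith
  set t1 : ℝ := (-((N - 2) * (2 * N - 3)) - s) / (2 * (2 * N - 1) * (2 * N - 3)) with ht1def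
  set t2 : ℝ := (-((N - 2) * (2 * N - 3)) + s) / (2 * (2 * N - 1) * (2 * N - 3)) with ht2def
  have ht1 : t1 * (2 * (2 * N - 1) * (2 * N - 3)) = -((N - 2) * (2 * N - 3)) - s := by
    rw [ht1def]; exact div_mul_cancel₀ _ hA0.ne'
  have ht2 : t2 * (2 * (2 * N - 1) * (2 * N - 3)) = -((N - 2) * (2 * N - 3)) + s := by
    rw [ht2def]; exact div_mul_cancel₀ _ hA0.ne'
  have hneg1 : (-((N - 2) * (2 * N - 3)) - s) ^ k = -(((N - 2) * (2 * N - 3) + s) ^ k) := by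
    rw [show -((N - 2) * (2 * N - 3)) - s = -((N - 2) * (2 * N - 3) + s) by ring,
      hodd.neg_pow]
  have hneg2 : (-((N - 2) * (2 * N - 3)) + s) ^ k = -(((N - 2) * (2 * N - 3) - s) ^ k) := by
    rw [show -((N - 2) * (2 * N - 3)) + s = -((N - 2) * (2 * N - 3) - s) by ring,
      hodd.neg_pow]
  have hpow1 : t1 ^ k * (2 * (2 * N - 1) * (2 * N - 3)) ^ k
      = -(((N - 2) * (2 * N - 3) + s) ^ k) := by
    rw [← mul_pow, ht1, hneg1]
  have hpow2 : t2 ^ k * (2 * (2 * N - 1) * (2 * N - 3)) ^ k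
      = -(((N - 2) * (2 * N - 3) - s) ^ k) := by
    rw [← mul_pow, ht2, hneg2]
  have hval1 : f3 n t1 * (2 * (2 * N - 1) * (2 * N - 3)) ^ (k + 3)
      = ((N - 2) * (2 * N - 3) + s) ^ k *
        (12 * (N - 2) * (2 * N - 1) * (2 * N - 3) ^ 3 *
          (3 * (N - 2) * (2 * N - 5) - (2 * N - 7) * s)) := by
    calc f3 n t1 * (2 * (2 * N - 1) * (2 * N - 3)) ^ (k + 3)
        = (t1 ^ k * (2 * (2 * N - 1) * (2 * N - 3)) ^ k) *
          (-(4 * (2 * N - 1) * (2 * N - 3) ^ 2 * (2 * N - 7) * t1 ^ 3 +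
             12 * (N - 1) * (N - 2) * (2 * N - 3) * (2 * N - 7) * t1 ^ 2 +
             3 * (N - 2) ^ 2 * (2 * N - 3) * (2 * N - 7) * t1 +
             (N - 2) ^ 2 * (N - 3) ^ 2) * (2 * (2 * N - 1) * (2 * N - 3)) ^ 3) := by
          simp only [f3]
          rw [hNdef, ← hkdef, pow_add]
          ring
      _ = -(((N - 2) * (2 * N - 3) + s) ^ k) *
          (-(4 * (2 * N - 1) * (2 * N - 3) ^ 2 * (2 * N - 7) * t1 ^ 3 +
             12 * (N - 1) * (N - 2) * (2 * N - 3) * (2 * N - 7) * t1 ^ 2 +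
             3 * (N - 2) ^ 2 * (2 * N - 3) * (2 * N - 7) * t1 +
             (N - 2) ^ 2 * (N - 3) ^ 2) * (2 * (2 * N - 1) * (2 * N - 3)) ^ 3) := by
          rw [hpow1]
      _ = ((N - 2) * (2 * N - 3) + s) ^ k *
          (12 * (N - 2) * (2 * N - 1) * (2 * N - 3) ^ 3 *
            (3 * (N - 2) * (2 * N - 5) - (2 * N - 7) * s)) := by
          linear_combination
            (((N - 2) * (2 * N - 3) + s) ^ k *
              (4 * (2 * N - 1) * (2 * N - 3) ^ 2 * (2 * N - 7) *
                ((t1 * (2 * (2 * N - 1) * (2 * N - 3))) ^ 2 +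
                 (t1 * (2 * (2 * N - 1) * (2 * N - 3))) * (-((N - 2) * (2 * N - 3)) - s) +
                 (-((N - 2) * (2 * N - 3)) - s) ^ 2) +
               12 * (N - 1) * (N - 2) * (2 * N - 3) * (2 * N - 7) *
                (2 * (2 * N - 1) * (2 * N - 3)) *
                ((t1 * (2 * (2 * N - 1) * (2 * N - 3))) + (-((N - 2) * (2 * N - 3)) - s)) +
               3 * (N - 2) ^ 2 * (2 * N - 3) * (2 * N - 7) *
                (2 * (2 * N - 1) * (2 * N - 3)) ^ 2)) * ht1 +
            (((N - 2) * (2 * N - 3) + s) ^ k *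
              (192*N^5 - 64*N^4*s - 1728*N^4 + 448*N^3*s + 5760*N^3 - 1024*N^2*s
                - 8880*N^2 + 912*N*s + 6228*N - 252*s - 1512)) * hS
  have hval2 : f3 n t2 * (2 * (2 * N - 1) * (2 * N - 3)) ^ (k + 3)
      = ((N - 2) * (2 * N - 3) - s) ^ k *
        (12 * (N - 2) * (2 * N - 1) * (2 * N - 3) ^ 3 *
          (3 * (N - 2) * (2 * N - 5) + (2 * N - 7) * s)) := by
    calc f3 n t2 * (2 * (2 * N - 1) * (2 * N - 3)) ^ (k + 3)
        = (t2 ^ k * (2 * (2 * N - 1) * (2 * N - 3)) ^ k) *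
          (-(4 * (2 * N - 1) * (2 * N - 3) ^ 2 * (2 * N - 7) * t2 ^ 3 +
             12 * (N - 1) * (N - 2) * (2 * N - 3) * (2 * N - 7) * t2 ^ 2 +
             3 * (N - 2) ^ 2 * (2 * N - 3) * (2 * N - 7) * t2 +
             (N - 2) ^ 2 * (N - 3) ^ 2) * (2 * (2 * N - 1) * (2 * N - 3)) ^ 3) := by
          simp only [f3]
          rw [hNdef, ← hkdef, pow_add]
          ring
      _ = -(((N - 2) * (2 * N - 3) - s) ^ k) *
          (-(4 * (2 * N - 1) * (2 * N - 3) ^ 2 * (2 * N - 7) * t2 ^ 3 +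
             12 * (N - 1) * (N - 2) * (2 * N - 3) * (2 * N - 7) * t2 ^ 2 +
             3 * (N - 2) ^ 2 * (2 * N - 3) * (2 * N - 7) * t2 +
             (N - 2) ^ 2 * (N - 3) ^ 2) * (2 * (2 * N - 1) * (2 * N - 3)) ^ 3) := by
          rw [hpow2]
      _ = ((N - 2) * (2 * N - 3) - s) ^ k *
          (12 * (N - 2) * (2 * N - 1) * (2 * N - 3) ^ 3 *
            (3 * (N - 2) * (2 * N - 5) + (2 * N - 7) * s)) := by
          linear_combination
            (((N - 2) * (2 * N - 3) - s) ^ k *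
              (4 * (2 * N - 1) * (2 * N - 3) ^ 2 * (2 * N - 7) *
                ((t2 * (2 * (2 * N - 1) * (2 * N - 3))) ^ 2 +
                 (t2 * (2 * (2 * N - 1) * (2 * N - 3))) * (-((N - 2) * (2 * N - 3)) + s) +
                 (-((N - 2) * (2 * N - 3)) + s) ^ 2) +
               12 * (N - 1) * (N - 2) * (2 * N - 3) * (2 * N - 7) *
                (2 * (2 * N - 1) * (2 * N - 3)) *
                ((t2 * (2 * (2 * N - 1) * (2 * N - 3))) + (-((N - 2) * (2 * N - 3)) + s)) +
               3 * (N - 2) ^ 2 * (2 * N - 3) * (2 * N - 7) *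
                (2 * (2 * N - 1) * (2 * N - 3)) ^ 2)) * ht2 +
            (((N - 2) * (2 * N - 3) - s) ^ k *
              (192*N^5 + 64*N^4*s - 1728*N^4 - 448*N^3*s + 5760*N^3 + 1024*N^2*s
                - 8880*N^2 - 912*N*s + 6228*N + 252*s - 1512)) * hS
  -- positivity facts
  have hCpos : 0 < 12 * (N - 2) * (2 * N - 1) * (2 * N - 3) ^ 3 := by
    have h1 : (0:ℝ) < N - 2 := by linarith
    have h2 : (0:ℝ) < 2 * N - 1 := by linarith
    have h3 : (0:ℝ) < 2 * N - 3 := by linarith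
    positivity
  have hMwpos : 0 < 3 * (N - 2) * (2 * N - 5) - (2 * N - 7) * s := by
    nlinarith [mul_lt_mul_of_pos_left hsu (show (0:ℝ) < 2 * N - 7 by linarith),
      sq_nonneg (2*N - 19/2)]
  have hQpos : 0 < 32*N^6 - 528*N^5 + 4728*N^4 - 24940*N^3 + 71688*N^2 - 101232*N + 54432 := by
    have h4 : (0:ℝ) ≤ N - 4 := by linarith
    nlinarith [pow_nonneg h4 6, pow_nonneg h4 5, pow_nonneg h4 4, pow_nonneg h4 3,
      pow_nonneg h4 2, h4]
  have hR1pos : 0 < 128*N^6 - 2112*N^5 + 14592*N^4 - 53968*N^3 + 112008*N^2 - 122400*N + 54432 := by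
    have h4 : (0:ℝ) ≤ N - 4 := by linarith
    nlinarith [pow_nonneg h4 6, pow_nonneg h4 5, pow_nonneg h4 4, pow_nonneg h4 3,
      pow_nonneg h4 2, h4]
  -- the key polynomial inequality
  have hstuff : ((((N - 2) * (2 * N - 3) - s) ^ 2
        + (2 * N - 7) * (2 * s) * ((N - 2) * (2 * N - 3) - s)
        + (2 * N - 7) * ((2 * N - 7) - 1) / 2 * (2 * s) ^ 2) *
          (3 * (N - 2) * (2 * N - 5) - (2 * N - 7) * s)
      - (3 * (N - 2) * (2 * N - 5) + (2 * N - 7) * s) * ((N - 2) * (2 * N - 3) - s) ^ 2) *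
        (3 * N / 2)
      = (5 * N / 2 - s) *
          (128*N^6 - 2112*N^5 + 14592*N^4 - 53968*N^3 + 112008*N^2 - 122400*N + 54432)
        + (s - N) *
          (32*N^6 - 528*N^5 + 4728*N^4 - 24940*N^3 + 71688*N^2 - 101232*N + 54432) := by
    linear_combination (48*N^5 - 24*N^4*s - 624*N^4 + 276*N^3*s + 2964*N^3 - 1056*N^2*s
      - 6084*N^2 + 1344*N*s + 4536*N) * hS
  have hBIGpos : 0 < (((N - 2) * (2 * N - 3) - s) ^ 2
        + (2 * N - 7) * (2 * s) * ((N - 2) * (2 * N - 3) - s)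
        + (2 * N - 7) * ((2 * N - 7) - 1) / 2 * (2 * s) ^ 2) *
          (3 * (N - 2) * (2 * N - 5) - (2 * N - 7) * s)
      - (3 * (N - 2) * (2 * N - 5) + (2 * N - 7) * s) * ((N - 2) * (2 * N - 3) - s) ^ 2 := by
    have h5 : 0 < 5 * N / 2 - s := by linarith
    have hsN : 0 ≤ s - N := by linarith
    nlinarith [hstuff, mul_pos h5 hR1pos, mul_nonneg hsN hQpos.le]
  set x : ℝ := 2 * s / ((N - 2) * (2 * N - 3) - s) with hxdef
  have hx0 : 0 ≤ x := by
    rw [hxdef]; exact div_nonneg (by linarith) hbspos.le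
  have hstep : 3 * (N - 2) * (2 * N - 5) + (2 * N - 7) * s
      < (1 + (2 * N - 7) * x + (2 * N - 7) * ((2 * N - 7) - 1) / 2 * x ^ 2) *
        (3 * (N - 2) * (2 * N - 5) - (2 * N - 7) * s) := by
    have e : (1 + (2 * N - 7) * x + (2 * N - 7) * ((2 * N - 7) - 1) / 2 * x ^ 2) *
          (3 * (N - 2) * (2 * N - 5) - (2 * N - 7) * s)
        - (3 * (N - 2) * (2 * N - 5) + (2 * N - 7) * s)
        = ((((N - 2) * (2 * N - 3) - s) ^ 2
            + (2 * N - 7) * (2 * s) * ((N - 2) * (2 * N - 3) - s)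
            + (2 * N - 7) * ((2 * N - 7) - 1) / 2 * (2 * s) ^ 2) *
              (3 * (N - 2) * (2 * N - 5) - (2 * N - 7) * s)
          - (3 * (N - 2) * (2 * N - 5) + (2 * N - 7) * s) * ((N - 2) * (2 * N - 3) - s) ^ 2)
          / (((N - 2) * (2 * N - 3) - s) ^ 2) := by
      rw [hxdef]
      field_simp
    have hpos2 := div_pos hBIGpos (pow_pos hbspos 2)
    linarith [e, hpos2]
  have hxk := bern k x hx0
  rw [hK] at hxk
  have hb1 : ((N - 2) * (2 * N - 3) - s) * (1 + x) = (N - 2) * (2 * N - 3) + s := by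
    rw [hxdef, mul_add, mul_one, ← mul_div_assoc, mul_div_cancel_left₀ _ hbspos.ne']
    ring
  have hpk : 0 < ((N - 2) * (2 * N - 3) - s) ^ k := pow_pos hbspos k
  have hcore : ((N - 2) * (2 * N - 3) - s) ^ k *
        (12 * (N - 2) * (2 * N - 1) * (2 * N - 3) ^ 3 *
          (3 * (N - 2) * (2 * N - 5) + (2 * N - 7) * s))
      < ((N - 2) * (2 * N - 3) + s) ^ k *
        (12 * (N - 2) * (2 * N - 1) * (2 * N - 3) ^ 3 *
          (3 * (N - 2) * (2 * N - 5) - (2 * N - 7) * s)) := by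
    calc ((N - 2) * (2 * N - 3) - s) ^ k *
          (12 * (N - 2) * (2 * N - 1) * (2 * N - 3) ^ 3 *
            (3 * (N - 2) * (2 * N - 5) + (2 * N - 7) * s))
        = 12 * (N - 2) * (2 * N - 1) * (2 * N - 3) ^ 3 *
            (((N - 2) * (2 * N - 3) - s) ^ k *
              (3 * (N - 2) * (2 * N - 5) + (2 * N - 7) * s)) := by ring
      _ < 12 * (N - 2) * (2 * N - 1) * (2 * N - 3) ^ 3 *
            (((N - 2) * (2 * N - 3) - s) ^ k *
              ((1 + (2 * N - 7) * x + (2 * N - 7) * ((2 * N - 7) - 1) / 2 * x ^ 2) *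
                (3 * (N - 2) * (2 * N - 5) - (2 * N - 7) * s))) := by
            exact mul_lt_mul_of_pos_left (mul_lt_mul_of_pos_left hstep hpk) hCpos
      _ ≤ 12 * (N - 2) * (2 * N - 1) * (2 * N - 3) ^ 3 *
            (((N - 2) * (2 * N - 3) - s) ^ k *
              ((1 + x) ^ k * (3 * (N - 2) * (2 * N - 5) - (2 * N - 7) * s))) := by
            refine mul_le_mul_of_nonneg_left (mul_le_mul_of_nonneg_left ?_ hpk.le) hCpos.le
            exact mul_le_mul_of_nonneg_right hxk hMwpos.le
      _ = ((N - 2) * (2 * N - 3) + s) ^ k *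
            (12 * (N - 2) * (2 * N - 1) * (2 * N - 3) ^ 3 *
              (3 * (N - 2) * (2 * N - 5) - (2 * N - 7) * s)) := by
            rw [← hb1, mul_pow]; ring
  refine lt_of_mul_lt_mul_right ?_ (pow_pos hA0 (k + 3)).le
  rw [hval1, hval2]
  exact hcore
end

section
/- Let m ≥ 0 and k ≥ 0 be integers with k ≤ m. If k = 2l is even, then there exist real numbers a₀,…,a_l such that, as an identity of real polynomials in x, d^k/dx^k [(x²−x)^m] = ∑_{j=0}^{l} a_j·(x²−x)^{m−l−j}·(2x−1)^{2j}. If k = 2l+1 is odd, then there exist real numbers b₀,…,b_l such that d^k/dx^k [(x²−x)^m] = (2x−1)·∑_{j=0}^{l} b_j·(x²−x)^{m−l−j−1}·(2x−1)^{2j}. -/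
open Polynomial

private lemma hP' : derivative ((X:ℝ[X])^2 - X) = 2*X - 1 := by simp [map_ofNat]; exact one_add_one_eq_two
private lemma hD' : derivative (2*(X:ℝ[X]) - 1) = 2 := by simp

private lemma term_deriv (a : ℝ) (n e : ℕ) :
  derivative (C a * ((X:ℝ[X])^2-X)^n * (2*X-1)^e) =
    C (a*n) * (X^2-X)^(n-1) * (2*X-1)^(e+1) + C (2*a*e) * (X^2-X)^n * (2*X-1)^(e-1) := by
  rw [derivative_mul, derivative_mul, derivative_pow, derivative_pow, hP', hD', derivative_C]
  simp only [C_mul, map_ofNat]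
  ring
private lemma step_even (m l : ℕ) (a : ℕ → ℝ) :
    derivative (∑ j ∈ Finset.range (l+1), C (a j) * ((X:ℝ[X])^2-X)^(m-l-j) * (2*X-1)^(2*j)) =
    (2*X-1) * ∑ j ∈ Finset.range (l+1),
      C ((m-l-j : ℕ) * a j + 4*(j+1)*(if j < l then a (j+1) else 0))
        * ((X:ℝ[X])^2-X)^(m-l-j-1) * (2*X-1)^(2*j) := by
  rw [derivative_sum]
  simp only [term_deriv]
  rw [Finset.sum_add_distrib]
  have h1 : ∑ j ∈ Finset.range (l+1), C (a j * ((m-l-j:ℕ):ℝ)) * ((X:ℝ[X])^2-X)^(m-l-j-1) * (2*X-1)^(2*j+1)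
      = (2*X-1) * ∑ j ∈ Finset.range (l+1), C (((m-l-j:ℕ):ℝ) * a j) * ((X:ℝ[X])^2-X)^(m-l-j-1) * (2*X-1)^(2*j) := by
    rw [Finset.mul_sum]
    refine Finset.sum_congr rfl fun j _ => ?_
    rw [pow_succ]
    simp only [C_mul]
    ring
  have h2 : ∑ j ∈ Finset.range (l+1), C (2 * a j * ((2*j:ℕ):ℝ)) * ((X:ℝ[X])^2-X)^(m-l-j) * (2*X-1)^(2*j-1)
      = (2*X-1) * ∑ j ∈ Finset.range (l+1), C (4*(j+1)*(if j < l then a (j+1) else 0)) * ((X:ℝ[X])^2-X)^(m-l-j-1) * (2*X-1)^(2*j) := by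
    rw [Finset.mul_sum, Finset.sum_range_succ', Finset.sum_range_succ]
    simp only [Nat.mul_zero, Nat.cast_zero, mul_zero, map_zero, zero_mul, add_zero,
      lt_self_iff_false, if_false, mul_zero, map_zero, zero_mul, mul_zero]
    refine Finset.sum_congr rfl fun j hj => ?_
    rw [if_pos (Finset.mem_range.mp hj),
      show m-l-(j+1) = m-l-j-1 from by omega,
      show 2*(j+1)-1 = 2*j+1 from by omega, pow_succ]
    simp only [map_mul, map_ofNat, map_natCast, map_add, map_one]
    push_cast
    ring
  rw [h1, h2, ← mul_add, ← Finset.sum_add_distrib]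
  refine congrArg _ (Finset.sum_congr rfl fun j _ => ?_)
  simp only [map_add, map_mul, map_ofNat, map_natCast, map_one]
  push_cast
  ring
private lemma step_odd (m l : ℕ) (b : ℕ → ℝ) :
    derivative ((2*X-1) * ∑ j ∈ Finset.range (l+1), C (b j) * ((X:ℝ[X])^2-X)^(m-l-j-1) * (2*X-1)^(2*j)) =
    ∑ j ∈ Finset.range (l+2),
      C ((2+4*j) * (if j < l+1 then b j else 0) + ((m-l-j:ℕ):ℝ) * (if j = 0 then 0 else b (j-1)))
        * ((X:ℝ[X])^2-X)^(m-l-1-j) * (2*X-1)^(2*j) := by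
  rw [derivative_mul, hD', derivative_sum]
  simp only [term_deriv]
  rw [Finset.sum_add_distrib, mul_add]
  have hS : (2:ℝ[X]) * ∑ j ∈ Finset.range (l+1), C (b j) * ((X:ℝ[X])^2-X)^(m-l-j-1) * (2*X-1)^(2*j)
      = ∑ j ∈ Finset.range (l+2), C (2 * (if j < l+1 then b j else 0)) * ((X:ℝ[X])^2-X)^(m-l-1-j) * (2*X-1)^(2*j) := by
    rw [Finset.mul_sum]
    conv_rhs => rw [Finset.sum_range_succ]
    simp only [lt_self_iff_false, if_false, mul_zero, map_zero, zero_mul, add_zero]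
    refine Finset.sum_congr rfl fun j hj => ?_
    rw [if_pos (Finset.mem_range.mp hj), show m-l-1-j = m-l-j-1 from by omega]
    simp only [map_mul, map_ofNat]
    ring
  have hS1 : (2*X-1) * ∑ j ∈ Finset.range (l+1),
        C (b j * ((m-l-j-1:ℕ):ℝ)) * ((X:ℝ[X])^2-X)^(m-l-j-1-1) * (2*X-1)^(2*j+1)
      = ∑ j ∈ Finset.range (l+2), C (((m-l-j:ℕ):ℝ) * (if j = 0 then 0 else b (j-1))) * ((X:ℝ[X])^2-X)^(m-l-1-j) * (2*X-1)^(2*j) := by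
    rw [Finset.mul_sum]
    conv_rhs => rw [Finset.sum_range_succ']
    simp only [eq_self_iff_true, if_true, ite_true, mul_zero, map_zero, zero_mul, add_zero]
    refine Finset.sum_congr rfl fun j hj => ?_
    rw [if_neg (Nat.succ_ne_zero j),
      show m-l-1-(j+1) = m-l-j-1-1 from by omega,
      show m-l-(j+1) = m-l-j-1 from by omega,
      show 2*(j+1) = (2*j+1)+1 from by omega, pow_succ, Nat.add_sub_cancel]
    simp only [map_mul, map_natCast]
    ring
  have hS2 : (2*X-1) * ∑ j ∈ Finset.range (l+1),
        C (2 * b j * ((2*j:ℕ):ℝ)) * ((X:ℝ[X])^2-X)^(m-l-j-1) * (2*X-1)^(2*j-1)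
      = ∑ j ∈ Finset.range (l+2), C (4*(j:ℝ) * (if j < l+1 then b j else 0)) * ((X:ℝ[X])^2-X)^(m-l-1-j) * (2*X-1)^(2*j) := by
    rw [Finset.mul_sum]
    conv_lhs => rw [Finset.sum_range_succ']
    conv_rhs => rw [Finset.sum_range_succ, Finset.sum_range_succ']
    simp only [Nat.mul_zero, Nat.cast_zero, mul_zero, zero_mul, map_zero, add_zero, zero_add,
      lt_self_iff_false, if_false]
    refine Finset.sum_congr rfl fun j hj => ?_
    rw [if_pos (Nat.succ_lt_succ (Finset.mem_range.mp hj)),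
      show m-l-1-(j+1) = m-l-(j+1)-1 from by omega,
      show 2*(j+1)-1 = 2*j+1 from by omega,
      show 2*(j+1) = (2*j+1)+1 from by omega, pow_succ]
    simp only [map_mul, map_ofNat, map_natCast]
    push_cast
    ring
  rw [hS, hS1, hS2, ← Finset.sum_add_distrib, ← Finset.sum_add_distrib]
  refine Finset.sum_congr rfl fun j _ => ?_
  simp only [map_add, map_mul, map_ofNat, map_natCast]
  push_cast
  ring

theorem stmt12 (m k : ℕ) (hk : k ≤ m) :
    (∀ l : ℕ, k = 2 * l →
      ∃ a : ℕ → ℝ,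
        derivative^[k] ((X ^ 2 - X : Polynomial ℝ) ^ m) =
          ∑ j ∈ Finset.range (l + 1),
            C (a j) * (X ^ 2 - X) ^ (m - l - j) * (2 * X - 1) ^ (2 * j)) ∧
    (∀ l : ℕ, k = 2 * l + 1 →
      ∃ b : ℕ → ℝ,
        derivative^[k] ((X ^ 2 - X : Polynomial ℝ) ^ m) =
          (2 * X - 1) *
            ∑ j ∈ Finset.range (l + 1),
              C (b j) * (X ^ 2 - X) ^ (m - l - j - 1) * (2 * X - 1) ^ (2 * j)) := by
  induction k with
  | zero =>
    constructor
    · intro l hl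
      obtain rfl : l = 0 := by omega
      exact ⟨fun _ => 1, by simp⟩
    · intro l hl
      omega
  | succ k ih =>
    obtain ⟨ih1, ih2⟩ := ih (by omega)
    constructor
    · intro l hl
      have hl1 : 1 ≤ l := by omega
      obtain ⟨b, hb⟩ := ih2 (l-1) (by omega)
      refine ⟨fun j => (2+4*j) * (if j < (l-1)+1 then b j else 0)
          + ((m-(l-1)-j:ℕ):ℝ) * (if j = 0 then 0 else b (j-1)), ?_⟩
      rw [Function.iterate_succ_apply', hb, step_odd m (l-1) b,
        show (l-1)+2 = l+1 from by omega]
      refine Finset.sum_congr rfl fun j hj => ?_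
      rw [show m-(l-1)-1-j = m-l-j from by omega]
    · intro l hl
      obtain ⟨a, ha⟩ := ih1 l (by omega)
      refine ⟨fun j => ((m-l-j:ℕ):ℝ) * a j + 4*(j+1)*(if j < l then a (j+1) else 0), ?_⟩
      rw [Function.iterate_succ_apply', ha, step_even m l a]
end

section
/- Let n ≥ 2 and 1 ≤ k ≤ n−1 be integers. There exists a real polynomial Q in one variable T such that, as an identity of polynomials in x, (d^{k−1}/dx^{k−1} [(x²−x)^{n−1}])² = Q(x²−x), the degree of Q is exactly 2n−k−1, the coefficients of Q of degree strictly less than 2(n−k) all vanish, and the coefficient of Q of degree 2(n−k) is nonzero. (Equivalently, the square of the antiderivative P_{n−1}^{(k−n)} of the shifted Legendre polynomial P_{n−1} is a polynomial in t = x²−x of degree 2n−k−1 whose lowest-order term has degree 2(n−k).) -/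
open Polynomial Finset

private lemma coeff_comp_sum' (Q u : ℝ[X]) (i : ℕ) :
    (Q.comp u).coeff i = ∑ j ∈ Finset.range (Q.natDegree + 1), Q.coeff j * (u ^ j).coeff i := by
  rw [Polynomial.comp, eval₂_eq_sum_range, finset_sum_coeff]
  simp [coeff_C_mul]

private lemma ufacts :
    (X ^ 2 - X : ℝ[X]).natDegree = 2 ∧ (X ^ 2 - X : ℝ[X]) ≠ 0 ∧
    (X ^ 2 - X : ℝ[X]).natTrailingDegree = 1 ∧ (X ^ 2 - X : ℝ[X]).trailingCoeff = -1 ∧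
    Monic (X ^ 2 - X : ℝ[X]) := by
  have c1 : (X ^ 2 - X : ℝ[X]).coeff 1 = -1 := by simp [coeff_X_pow]
  have c0 : (X ^ 2 - X : ℝ[X]).coeff 0 = 0 := by simp
  have hne : (X ^ 2 - X : ℝ[X]) ≠ 0 := fun h => by simp [h] at c1
  have hdeg : (X ^ 2 - X : ℝ[X]).natDegree = 2 := by
    rw [natDegree_sub_eq_left_of_natDegree_lt] <;> simp
  have hntd : (X ^ 2 - X : ℝ[X]).natTrailingDegree = 1 := by
    refine le_antisymm (natTrailingDegree_le_of_ne_zero (by rw [c1]; norm_num)) ?_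
    refine le_natTrailingDegree hne fun m hm => ?_
    interval_cases m
    exact c0
  have htc : (X ^ 2 - X : ℝ[X]).trailingCoeff = -1 := by rw [trailingCoeff, hntd, c1]
  have hmon : Monic (X ^ 2 - X : ℝ[X]) := by
    apply monic_X_pow_sub
    simpa using degree_X_le
  exact ⟨hdeg, hne, hntd, htc, hmon⟩

private lemma upow (e : ℕ) :
    ((X ^ 2 - X : ℝ[X]) ^ e).natTrailingDegree = e ∧
    ((X ^ 2 - X : ℝ[X]) ^ e).trailingCoeff = (-1) ^ e := by
  obtain ⟨hdeg, hne, hntd, htc, hmon⟩ := ufacts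
  induction e with
  | zero => simp [trailingCoeff]
  | succ e ih =>
    constructor
    · rw [pow_succ, natTrailingDegree_mul (pow_ne_zero _ hne) hne, ih.1, hntd]
    · rw [pow_succ, trailingCoeff_mul, ih.2, htc, pow_succ]

private lemma udiag (e : ℕ) : ((X ^ 2 - X : ℝ[X]) ^ e).coeff e = (-1) ^ e := by
  have h := (upow e).2
  rwa [trailingCoeff, (upow e).1] at h

private lemma gfacts (m j : ℕ) (hjm : j < m) :
    letI g := derivative^[j] ((X ^ 2 - X : ℝ[X]) ^ m)
    (∀ i < m - j, g.coeff i = 0) ∧ g.coeff (m - j) ≠ 0 ∧ g.coeff (2 * m - j) ≠ 0 ∧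
      g.natDegree = 2 * m - j ∧ g.natTrailingDegree = m - j := by
  obtain ⟨hdeg, hne, hntd, htc, hmon⟩ := ufacts
  set u : ℝ[X] := X ^ 2 - X with hu
  set p : ℝ[X] := u ^ m with hp
  set g : ℝ[X] := derivative^[j] p with hg
  have hpdeg : p.natDegree = 2 * m := by
    rw [hp, hmon.natDegree_pow, hdeg, Nat.mul_comm]
  have cp_low : ∀ i < m, p.coeff i = 0 := fun i hi =>
    coeff_eq_zero_of_lt_natTrailingDegree (by rw [hp, (upow m).1]; exact hi)
  have cp_m : p.coeff m = (-1) ^ m := udiag m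
  have cp_top : p.coeff (2 * m) = 1 := by
    have := (hmon.pow m).leadingCoeff
    rwa [leadingCoeff, hpdeg] at this
  have cg : ∀ i, g.coeff i = (i + j).descFactorial j • p.coeff (i + j) := fun i =>
    coeff_iterate_derivative p i
  have glow : ∀ i < m - j, g.coeff i = 0 := by
    intro i hi
    rw [cg i, cp_low (i + j) (by omega), smul_zero]
  have gmj : g.coeff (m - j) ≠ 0 := by
    rw [cg, (by omega : m - j + j = m), cp_m]
    have h1 : m.descFactorial j ≠ 0 := fun h => by
      rw [Nat.descFactorial_eq_zero_iff_lt] at h; omega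
    simp only [nsmul_eq_mul]
    exact mul_ne_zero (Nat.cast_ne_zero.mpr h1) (pow_ne_zero _ (by norm_num))
  have gtop : g.coeff (2 * m - j) ≠ 0 := by
    rw [cg, (by omega : 2 * m - j + j = 2 * m), cp_top]
    have h1 : (2 * m).descFactorial j ≠ 0 := fun h => by
      rw [Nat.descFactorial_eq_zero_iff_lt] at h; omega
    simp only [nsmul_eq_mul, mul_one]
    exact_mod_cast h1
  have g0 : g ≠ 0 := fun h => gtop (by simp [h])
  have gdeg : g.natDegree = 2 * m - j := by
    refine le_antisymm ?_ (le_natDegree_of_ne_zero gtop)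
    have := natDegree_iterate_derivative p j
    rwa [hpdeg] at this
  have gntd : g.natTrailingDegree = m - j :=
    le_antisymm (natTrailingDegree_le_of_ne_zero gmj) (le_natTrailingDegree g0 glow)
  exact ⟨glow, gmj, gtop, gdeg, gntd⟩

private lemma sym (m j : ℕ) :
    ((derivative^[j] ((X ^ 2 - X : ℝ[X]) ^ m)) ^ 2).comp (1 - X) =
      (derivative^[j] ((X ^ 2 - X : ℝ[X]) ^ m)) ^ 2 := by
  set g : ℝ[X] := derivative^[j] ((X ^ 2 - X : ℝ[X]) ^ m) with hg
  have hu_sym : (X ^ 2 - X : ℝ[X]).comp (1 - X) = X ^ 2 - X := by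
    rw [sub_comp, pow_comp, X_comp]
    ring
  have hp_sym : ((X ^ 2 - X : ℝ[X]) ^ m).comp (1 - X) = (X ^ 2 - X) ^ m := by
    rw [pow_comp, hu_sym]
  have hgs : g = (-1) ^ j * g.comp (1 - X) := by
    have h := iterate_derivative_comp_one_sub_X ((X ^ 2 - X : ℝ[X]) ^ m) j
    rwa [hp_sym] at h
  have hsq : (((-1 : ℝ[X]) ^ j)) ^ 2 = 1 := by
    rw [← pow_mul, mul_comm, pow_mul]
    norm_num
  rw [pow_comp]
  conv_rhs => rw [hgs]
  rw [mul_pow, hsq, one_mul]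

private lemma coeff_comp_neg_X' (p : ℝ[X]) (i : ℕ) :
    (p.comp (-X)).coeff i = (-1) ^ i * p.coeff i := by
  induction p using Polynomial.induction_on' with
  | add p q hp hq => simp [add_comp, hp, hq]; ring
  | monomial n a =>
    have h1 : ((-X : ℝ[X])) ^ n = C ((-1:ℝ)^n) * X ^ n := by
      rw [neg_pow, map_pow, map_neg, map_one]
    rw [← C_mul_X_pow_eq_monomial, mul_comp, pow_comp, C_comp, X_comp, h1, ← mul_assoc,
      ← C_mul, coeff_C_mul, coeff_C_mul, coeff_X_pow]
    by_cases h : i = n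
    · subst h; ring
    · simp [h]

private lemma sum_range_two_mul' {M : Type*} [AddCommMonoid M] (N : ℕ) (f : ℕ → M) :
    ∑ i ∈ Finset.range (2 * N), f i =
      (∑ j ∈ Finset.range N, f (2 * j)) + ∑ j ∈ Finset.range N, f (2 * j + 1) := by
  induction N with
  | zero => simp
  | succ N ih =>
    have h2 : 2 * (N + 1) = 2 * N + 1 + 1 := by ring
    rw [h2, Finset.sum_range_succ, Finset.sum_range_succ, ih, Finset.sum_range_succ,
      Finset.sum_range_succ]
    abel

private lemma exists_even_comp' {q : ℝ[X]} (h : ∀ i, Odd i → q.coeff i = 0) :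
    ∃ r : ℝ[X], q = r.comp (X ^ 2) := by
  refine ⟨∑ j ∈ Finset.range (q.natDegree + 1), C (q.coeff (2 * j)) * X ^ j, ?_⟩
  conv_lhs => rw [q.as_sum_range' (2 * (q.natDegree + 1)) (by omega)]
  rw [sum_range_two_mul']
  have h2 : ∑ j ∈ Finset.range (q.natDegree + 1), (monomial (2*j+1)) (q.coeff (2*j+1)) = 0 :=
    Finset.sum_eq_zero fun j _ => by rw [h (2*j+1) ⟨j, by ring⟩, monomial_zero_right]
  rw [h2, add_zero, Polynomial.sum_comp]
  refine Finset.sum_congr rfl fun j _ => ?_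
  rw [mul_comp, C_comp, pow_comp, X_comp, ← pow_mul, C_mul_X_pow_eq_monomial]

private lemma exists_comp_of_sym {p : ℝ[X]} (hsym : p.comp (1 - X) = p) :
    ∃ Q : ℝ[X], p = Q.comp (X ^ 2 - X) := by
  set q : ℝ[X] := p.comp (X + C (1/2 : ℝ)) with hq
  have hC : (C (1/2 : ℝ)) + C (1/2) = 1 := by
    rw [← C_add]
    norm_num
  have hq_even_comp : q.comp (-X) = q := by
    have h1 : q.comp (-X) = p.comp (-X + C (1/2 : ℝ)) := by
      rw [hq, comp_assoc]
      congr 1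
      simp
    have h2 : (1 - X : ℝ[X]).comp (X + C (1/2 : ℝ)) = -X + C (1/2 : ℝ) := by
      rw [sub_comp, one_comp, X_comp]
      linear_combination -hC
    rw [h1, hq]
    conv_rhs => rw [← hsym]
    rw [comp_assoc, h2]
  have hq_even : ∀ i, Odd i → q.coeff i = 0 := by
    intro i hi
    have h := congrArg (fun r => Polynomial.coeff r i) hq_even_comp
    simp only [coeff_comp_neg_X'] at h
    rw [hi.neg_one_pow] at h
    linarith
  obtain ⟨r, hr⟩ := exists_even_comp' hq_even
  refine ⟨r.comp (X + C (1/4 : ℝ)), ?_⟩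
  have hback : p = q.comp (X - C (1/2 : ℝ)) := by
    rw [hq, comp_assoc, add_comp, X_comp, C_comp, sub_add_cancel, comp_X]
  have hsq2 : (X - C (1/2 : ℝ)) ^ 2 = (X + C (1/4 : ℝ)).comp (X ^ 2 - X) := by
    rw [add_comp, X_comp, C_comp]
    have hC2 : (C (1/2 : ℝ)) ^ 2 = C (1/4 : ℝ) := by
      rw [← C_pow]
      norm_num
    linear_combination - (X : ℝ[X]) * hC + hC2
  rw [hback, hr, comp_assoc, pow_comp, X_comp, hsq2, ← comp_assoc]

private lemma key (m j : ℕ) (hjm : j < m) :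
    ∃ Q : Polynomial ℝ,
      (derivative^[j] ((X ^ 2 - X : Polynomial ℝ) ^ m)) ^ 2 = Q.comp (X ^ 2 - X) ∧
      Q.natDegree = 2 * m - j ∧
      (∀ i < 2 * (m - j), Q.coeff i = 0) ∧
      Q.coeff (2 * (m - j)) ≠ 0 := by
  obtain ⟨hdeg, hne, hntd, htc, hmon⟩ := ufacts
  obtain ⟨glow, gmj, gtop, gdeg, gntd⟩ := gfacts m j hjm
  set g : ℝ[X] := derivative^[j] ((X ^ 2 - X : ℝ[X]) ^ m) with hg
  have g0 : g ≠ 0 := fun h => gtop (by simp [h])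
  -- facts about g ^ 2
  have gsq0 : g ^ 2 ≠ 0 := pow_ne_zero _ g0
  have ntd_gsq : (g ^ 2).natTrailingDegree = 2 * (m - j) := by
    rw [sq, natTrailingDegree_mul g0 g0, gntd]
    ring
  have deg_gsq : (g ^ 2).natDegree = 2 * (2 * m - j) := by
    rw [sq, natDegree_mul g0 g0, gdeg]
    ring
  have gsq_low : ∀ i < 2 * (m - j), (g ^ 2).coeff i = 0 := fun i hi =>
    coeff_eq_zero_of_lt_natTrailingDegree (by rw [ntd_gsq]; exact hi)
  have gsq_tc : (g ^ 2).coeff (2 * (m - j)) ≠ 0 := by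
    rw [← ntd_gsq]
    exact coeff_natTrailingDegree_ne_zero.mpr gsq0
  -- existence of Q
  obtain ⟨Q, hQ⟩ := exists_comp_of_sym (sym m j)
  -- degree of Q
  have hQdeg : Q.natDegree = 2 * m - j := by
    have h := congrArg natDegree hQ
    rw [deg_gsq, natDegree_comp, hdeg] at h
    omega
  -- coefficient analysis
  have hcoeff : ∀ i, (∀ i' < i, Q.coeff i' = 0) →
      (g ^ 2).coeff i = Q.coeff i * (-1 : ℝ) ^ i := by
    intro i hlow
    by_cases hile : i ≤ Q.natDegree
    · rw [hQ, coeff_comp_sum']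
      rw [Finset.sum_eq_single i]
      · rw [udiag]
      · intro b hb hbne
        rcases lt_or_gt_of_ne hbne with hbi | hbi
        · rw [hlow b hbi, zero_mul]
        · have hz : ((X ^ 2 - X : ℝ[X]) ^ b).coeff i = 0 :=
            coeff_eq_zero_of_lt_natTrailingDegree (p := (X ^ 2 - X : ℝ[X]) ^ b)
              (by rw [(upow b).1]; exact hbi)
          rw [hz, mul_zero]
      · intro hmem
        exact absurd (Finset.mem_range.mpr (by omega)) hmem
    · push_neg at hile
      rw [coeff_eq_zero_of_natDegree_lt hile, zero_mul]
      rw [hQ, coeff_comp_sum']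
      refine Finset.sum_eq_zero fun b hb => ?_
      rw [hlow b (by simp at hb; omega), zero_mul]
  have hQlow : ∀ i < 2 * (m - j), Q.coeff i = 0 := by
    intro i hi
    induction i using Nat.strong_induction_on with
    | _ i ih =>
      have h := hcoeff i (fun i' hi' => ih i' hi' (by omega))
      rw [gsq_low i hi] at h
      have hne1 : ((-1 : ℝ)) ^ i ≠ 0 := pow_ne_zero _ (by norm_num)
      field_simp at h
      exact (mul_eq_zero.mp h.symm).resolve_right hne1
  have hQtc : Q.coeff (2 * (m - j)) ≠ 0 := by
    have h := hcoeff (2 * (m - j)) (fun i' hi' => hQlow i' hi')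
    intro hzero
    rw [hzero, zero_mul] at h
    exact gsq_tc h
  exact ⟨Q, hQ, hQdeg, hQlow, hQtc⟩

theorem stmt13 (n k : ℕ) (hn : 2 ≤ n) (hk1 : 1 ≤ k) (hk : k ≤ n - 1) :
    ∃ Q : Polynomial ℝ,
      (derivative^[k - 1] ((X ^ 2 - X : Polynomial ℝ) ^ (n - 1))) ^ 2 =
        Q.comp (X ^ 2 - X) ∧
      Q.natDegree = 2 * n - k - 1 ∧
      (∀ i < 2 * (n - k), Q.coeff i = 0) ∧
      Q.coeff (2 * (n - k)) ≠ 0 := by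
  obtain ⟨Q, h1, h2, h3, h4⟩ := key (n - 1) (k - 1) (by omega)
  refine ⟨Q, h1, by omega, ?_, ?_⟩
  · intro i hi
    exact h3 i (by omega)
  · have : 2 * ((n - 1) - (k - 1)) = 2 * (n - k) := by omega
    rwa [this] at h4
end
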